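/- arXiv:2004.14032 — 6 statements merged into one kernel-verified Lean document; each statement's English description precedes it below -/
import Mathlib

section
/- Let m, N ≥ 1 be integers and let v_0, …, v_{m−1} be distinct positive real numbers. Set σ_j² = Σ_{k=0}^{m−1} v_j^{2k}, σ² = Σ_{j=0}^{m−1} σ_j², γ₋ = min_j v_j, γ₊ = max_j v_j, and α = ((m−1)/σ²)^{(m−1)/2} · ∏_{0≤j<k≤m−1} |v_j − v_k|. For t > 0 define Ψ_N(t) = (1−t²)/(1−t^{2/N}) if t ≠ 1 and Ψ_N(1) = N. Let W_N be the (mN)×m matrix with entries (W_N)_{ij} = v_j^{(i−1)/N} for 1 ≤ i ≤ mN and 0 ≤ j ≤ m−1. Then for every x ∈ ℂ^m, α² Ψ_N(γ₋) ‖x‖² ≤ ‖W_N x‖² ≤ σ² Ψ_N(γ₊) ‖x‖². -/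
open MeasureTheory Matrix
open scoped Real BigOperators

noncomputable section

/-- Fourier transform normalized as `f̂ ξ = ∫ f t · e^{-i t ξ} dt`. -/
def FT (f : ℝ → ℂ) (ξ : ℝ) : ℂ :=
  ∫ t : ℝ, Complex.exp (-(Complex.I * t * ξ)) * f t

/-- The (real-valued on `[-c,c]`) values of `φ̂` for a kernel of the class `Φ_c`. -/
def phihat (φ : ℝ → ℂ) (ξ : ℝ) : ℝ := (FT φ ξ).re

/-- The class `Φ_c`: `φ ∈ L¹`, `φ̂(0) = 1` and `κ ≤ φ̂ ≤ 1` on `[-c,c]` for some `κ > 0`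
(in particular `φ̂` is real-valued there). -/
def InPhi (c : ℝ) (φ : ℝ → ℂ) : Prop :=
  Integrable φ ∧ FT φ 0 = 1 ∧
    ∃ κ : ℝ, 0 < κ ∧ ∀ ξ : ℝ, |ξ| ≤ c →
      FT φ ξ = ((FT φ ξ).re : ℂ) ∧ κ ≤ (FT φ ξ).re ∧ (FT φ ξ).re ≤ 1

/-- `2c`-periodization of `g·1_{[-c,c)}`: for every `x` there is a unique `k ∈ ℤ` with
`x - 2ck ∈ [-c,c)`, namely `k = ⌊(x+c)/(2c)⌋`. -/
def per (c : ℝ) (g : ℝ → ℝ) (x : ℝ) : ℝ :=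
  g (x - 2*c*(⌊(x + c)/(2*c)⌋ : ℝ))

/-- `2c`-periodization of a complex-valued `g·1_{[-c,c)}`. -/
def perC (c : ℝ) (g : ℝ → ℂ) (x : ℝ) : ℂ :=
  g (x - 2*c*(⌊(x + c)/(2*c)⌋ : ℝ))

/-- The sampled diffusion matrix `ℬ_m(ξ)`. -/
def Bmat (c : ℝ) (g : ℝ → ℝ) (m : ℕ) (ξ : ℝ) : Matrix (Fin m) (Fin m) ℂ :=
  Matrix.of fun j k : Fin m =>
    (((∫ t in (0:ℝ)..1,
        per c g (2*c/(m:ℝ)*(ξ + (j.val : ℝ))) ^ t *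
          per c g (2*c/(m:ℝ)*(ξ + (k.val : ℝ))) ^ t) : ℝ) : ℂ)

/-- The value `f_t(x)` of the evolved signal, computed by Fourier inversion from
`f̂_t = ĝ^t·f̂` where `F = f̂` is supported in `[-c,c]`. -/
def heatSample (c : ℝ) (g : ℝ → ℝ) (F : ℝ → ℂ) (t x : ℝ) : ℂ :=
  ((1/(2*Real.pi) : ℝ) : ℂ) *
    ∫ ξ in (-c)..c, F ξ * (((g ξ) ^ t : ℝ) : ℂ) * Complex.exp (Complex.I * x * ξ)

/-- The vectorization `𝐟(ξ) = ((f̂)_p(2c(ξ+j)/m))_{j=0,…,m-1}`. -/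
def fvec (c : ℝ) (m : ℕ) (F : ℝ → ℂ) (ξ : ℝ) : Fin m → ℂ :=
  fun j => perC c F (2*c/(m:ℝ)*(ξ + (j.val : ℝ)))

/-- `Ψ_N(t) = (1-t²)/(1-t^{2/N})` for `t ≠ 1`, `Ψ_N(1) = N`. -/
def PsiFn (N : ℕ) (t : ℝ) : ℝ :=
  if t = 1 then (N : ℝ) else (1 - t^2)/(1 - t ^ ((2:ℝ)/(N:ℝ)))

/-- `∏_{0 ≤ j < k ≤ m-1} |v_j - v_k|`. -/
def pairProd (m : ℕ) (v : Fin m → ℝ) : ℝ :=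
  ∏ p ∈ Finset.univ.filter (fun p : Fin m × Fin m => p.1 < p.2), |v p.1 - v p.2|

/-- `σ² = Σ_j σ_j²` with `σ_j² = Σ_{k=0}^{m-1} v_j^{2k}`. -/
def sigmaSq (m : ℕ) (v : Fin m → ℝ) : ℝ :=
  ∑ j : Fin m, ∑ k : Fin m, v j ^ (2*k.val)

/-- The `(mN) × m` Vandermonde-type matrix `W_N` with entries `v_j^{(i-1)/N}`, `1 ≤ i ≤ mN`. -/
def VandW (m N : ℕ) (v : Fin m → ℝ) : Matrix (Fin (m*N)) (Fin m) ℂ :=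
  Matrix.of fun i j => (((v j ^ ((i.val : ℝ)/(N : ℝ))) : ℝ) : ℂ)

/-- `Δ_m(ξ) = ∏_{0≤j<k≤m-1} |(φ̂)_p(2c(ξ+j)/m) - (φ̂)_p(2c(ξ+k)/m)|`. -/
def DeltaM (c : ℝ) (g : ℝ → ℝ) (m : ℕ) (ξ : ℝ) : ℝ :=
  ∏ p ∈ Finset.univ.filter (fun p : Fin m × Fin m => p.1 < p.2),
    |per c g (2*c/(m:ℝ)*(ξ + (p.1.val : ℝ))) - per c g (2*c/(m:ℝ)*(ξ + (p.2.val : ℝ)))|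

/-- `(sinc(c·) * φ_t)(x) = (1/(2c)) ∫_{-c}^{c} φ̂(ξ)^t e^{ixξ} dξ`. -/
def sincConv (c : ℝ) (g : ℝ → ℝ) (t x : ℝ) : ℂ :=
  ((1/(2*c) : ℝ) : ℂ) *
    ∫ ξ in (-c)..c, (((g ξ) ^ t : ℝ) : ℂ) * Complex.exp (Complex.I * x * ξ)

/-- `c_{φ,L} = 2(κ^{2L} - 1)/(π² ln κ)`. -/
def cPhiL (κ L : ℝ) : ℝ := 2*(κ ^ (2*L) - 1)/(Real.pi^2 * Real.log κ)

/-- Legendre polynomial `P_k` via Rodrigues' formula. -/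
def legendreP (k : ℕ) : Polynomial ℝ :=
  Polynomial.C (1/((2:ℝ)^k * (Nat.factorial k : ℝ))) *
    ((fun q : Polynomial ℝ => Polynomial.derivative q)^[k] ((Polynomial.X^2 - 1)^k))

/-- Lower Beurling density. -/
def lowerDensity (Λ : Set ℝ) : ℝ :=
  Filter.liminf
    (fun r : ℝ => ⨅ x : ℝ, ((Λ ∩ Set.Icc (x - r) (x + r)).ncard : ℝ)/(2*r)) Filter.atTop

/-- Upper Beurling density. -/
def upperDensity (Λ : Set ℝ) : ℝ :=
  Filter.limsup
    (fun r : ℝ => ⨆ x : ℝ, ((Λ ∩ Set.Icc (x - r) (x + r)).ncard : ℝ)/(2*r)) Filter.atTop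

/-- Fourier transform of the Gaussian heat kernel at time 1: `φ̂(ξ) = e^{-σ²ξ²}`. -/
def GaussHat (σ : ℝ) (ξ : ℝ) : ℝ := Real.exp (-(σ^2 * ξ^2))


open scoped ComplexOrder

private lemma prod_pairs_eq {M : Type*} [CommMonoid M] {n : ℕ} (f : Fin n → Fin n → M) :
    ∏ p ∈ Finset.univ.filter (fun p : Fin n × Fin n => p.1 < p.2), f p.1 p.2
      = ∏ i : Fin n, ∏ j ∈ Finset.Ioi i, f i j := by
  rw [Finset.prod_sigma']
  refine Finset.prod_nbij' (fun p : Fin n × Fin n => (⟨p.1, p.2⟩ : (_ : Fin n) × Fin n))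
    (fun x : (_ : Fin n) × Fin n => (x.1, x.2)) ?_ ?_ ?_ ?_ ?_
  · rintro ⟨a, b⟩ ha
    simp only [Finset.mem_filter, Finset.mem_univ, true_and] at ha
    simp [Finset.mem_sigma, Finset.mem_Ioi, ha]
  · rintro ⟨a, b⟩ ha
    simp only [Finset.mem_sigma, Finset.mem_univ, Finset.mem_Ioi, true_and] at ha
    simp [Finset.mem_filter, ha]
  · intro a _; rfl
  · intro a _; rfl
  · intro a _; rfl

private lemma star_mul_self_re (z : ℂ) : (star z * z).re = ‖z‖^2 := by
  rw [Complex.star_def, mul_comm, Complex.mul_conj']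
  norm_cast

private lemma quad_lower {n : Type*} [Fintype n] [DecidableEq n] {G : Matrix n n ℂ}
    (hG : G.IsHermitian) {c : ℝ} (hc : ∀ i, c ≤ hG.eigenvalues i) (x : n → ℂ) :
    c * ∑ i, ‖x i‖^2 ≤ (star x ⬝ᵥ (G *ᵥ x)).re := by
  set U : Matrix n n ℂ := (hG.eigenvectorUnitary : Matrix n n ℂ) with hU
  set y : n → ℂ := star U *ᵥ x with hy
  have hsy : star y = star x ᵥ* U := by
    rw [hy, Matrix.star_mulVec, Matrix.star_eq_conjTranspose, Matrix.conjTranspose_conjTranspose]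
  have hform : star x ⬝ᵥ (G *ᵥ x) = ∑ i, ((hG.eigenvalues i : ℂ)) * (star (y i) * y i) := by
    conv_lhs => rw [hG.spectral_theorem, Unitary.conjStarAlgAut_apply]
    rw [← Matrix.mulVec_mulVec, ← Matrix.mulVec_mulVec, Matrix.dotProduct_mulVec, ← hsy]
    simp only [dotProduct, Matrix.mulVec_diagonal, Function.comp_apply, Pi.star_apply]
    exact Finset.sum_congr rfl fun i _ => mul_left_comm _ _ _
  have hnorm : star y ⬝ᵥ y = star x ⬝ᵥ x := by
    rw [hsy, ← Matrix.dotProduct_mulVec, Matrix.mulVec_mulVec,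
      (Matrix.mem_unitaryGroup_iff).mp hG.eigenvectorUnitary.2, Matrix.one_mulVec]
  have hyx : ∑ i, ‖y i‖^2 = ∑ i, ‖x i‖^2 := by
    have h2 := congrArg Complex.re hnorm
    rw [dotProduct, dotProduct, Complex.re_sum, Complex.re_sum] at h2
    simpa only [Pi.star_apply, star_mul_self_re] using h2
  have hre : (star x ⬝ᵥ (G *ᵥ x)).re = ∑ i, hG.eigenvalues i * ‖y i‖^2 := by
    rw [hform, Complex.re_sum]
    refine Finset.sum_congr rfl fun i _ => ?_
    have : star (y i) * y i = ((‖y i‖^2 : ℝ) : ℂ) := by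
      rw [Complex.star_def, mul_comm, Complex.mul_conj']; norm_cast
    rw [this, ← Complex.ofReal_mul]
    exact Complex.ofReal_re _
  rw [hre, ← hyx]
  calc c * ∑ i, ‖y i‖^2 = ∑ i, c * ‖y i‖^2 := Finset.mul_sum _ _ _
    _ ≤ ∑ i, hG.eigenvalues i * ‖y i‖^2 :=
      Finset.sum_le_sum fun i _ => mul_le_mul_of_nonneg_right (hc i) (sq_nonneg _)

private lemma eig_min (m : ℕ) (hm : 1 ≤ m) (μ : Fin m → ℝ) (hnn : ∀ i, 0 ≤ μ i)
    (S P : ℝ) (hS : 0 < S) (htr : ∑ i, μ i = S) (hdet : ∏ i, μ i = P^2) (i₀ : Fin m) :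
    (((m:ℝ)-1)/S) ^ (((m:ℝ)-1)) * P^2 ≤ μ i₀ := by
  set c : ℝ := (m:ℝ)-1 with hc
  have hc0 : 0 ≤ c := by rw [hc]; simp; exact_mod_cast hm
  have hprod_nn : 0 ≤ ∏ i ∈ Finset.univ.erase i₀, μ i :=
    Finset.prod_nonneg fun i _ => hnn i
  have hB : ∏ i ∈ Finset.univ.erase i₀, μ i ≤ (S/c) ^ c := by
    rcases eq_or_lt_of_le hc0 with h0 | hpos
    · have hempty : Finset.univ.erase i₀ = ∅ := by
        apply Finset.card_eq_zero.mp
        rw [Finset.card_erase_of_mem (Finset.mem_univ _), Finset.card_univ, Fintype.card_fin]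
        have h1 : (m:ℝ) = 1 := by rw [hc] at h0; linarith
        have h2 : m = 1 := by exact_mod_cast h1
        omega
      rw [hempty, Finset.prod_empty, ← h0, Real.rpow_zero]
    · have hcne : c ≠ 0 := ne_of_gt hpos
      have hcard : (((Finset.univ.erase i₀).card : ℕ) : ℝ) = c := by
        rw [Finset.card_erase_of_mem (Finset.mem_univ _), Finset.card_univ, Fintype.card_fin,
          Nat.cast_sub hm, hc]
        norm_num
      have hAM := Real.geom_mean_le_arith_mean_weighted (Finset.univ.erase i₀)
        (fun _ => 1/c) μ (fun i _ => by positivity)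
        (by rw [Finset.sum_const, nsmul_eq_mul, hcard]; field_simp) (fun i _ => hnn i)
      rw [Real.finset_prod_rpow _ _ (fun i _ => hnn i) _] at hAM
      have hsum_le : ∑ i ∈ Finset.univ.erase i₀, (1/c) * μ i ≤ S/c := by
        rw [← Finset.mul_sum]
        have h5 : ∑ i ∈ Finset.univ.erase i₀, μ i ≤ S := by
          rw [← htr]
          exact Finset.sum_le_sum_of_subset_of_nonneg (Finset.subset_univ _)
            (fun i _ _ => hnn i)
        calc (1/c) * ∑ i ∈ Finset.univ.erase i₀, μ i ≤ (1/c) * S :=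
              mul_le_mul_of_nonneg_left h5 (by positivity)
          _ = S/c := by ring
      have h3 : (∏ i ∈ Finset.univ.erase i₀, μ i) ^ ((1:ℝ)/c) ≤ S/c := hAM.trans hsum_le
      have h4 := Real.rpow_le_rpow (Real.rpow_nonneg hprod_nn _) h3 hc0
      rwa [← Real.rpow_mul hprod_nn, one_div_mul_cancel hcne, Real.rpow_one] at h4
  have hBpos : 0 < (S/c)^c := by
    rcases eq_or_lt_of_le hc0 with h0 | hpos
    · rw [← h0, Real.rpow_zero]; norm_num
    · exact Real.rpow_pos_of_pos (by positivity) _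
  have hP2 : P^2 ≤ μ i₀ * (S/c)^c :=
    calc P^2 = ∏ i, μ i := hdet.symm
      _ = μ i₀ * ∏ i ∈ Finset.univ.erase i₀, μ i :=
          (Finset.mul_prod_erase _ _ (Finset.mem_univ _)).symm
      _ ≤ μ i₀ * (S/c)^c := mul_le_mul_of_nonneg_left hB (hnn i₀)
  have hcS : (c/S)^c = ((S/c)^c)⁻¹ := by
    rw [← Real.inv_rpow (by positivity), inv_div]
  rw [hcS, inv_mul_eq_div, div_le_iff₀ hBpos]
  linarith [hP2]

private lemma gram_facts (m : ℕ) (v : Fin m → ℝ) :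
    let A : Matrix (Fin m) (Fin m) ℂ := (Matrix.vandermonde (fun j => (v j : ℂ)))ᵀ
    let hG : (Aᴴ * A).IsHermitian := (Matrix.posSemidef_conjTranspose_mul_self A).1
    (∑ i, hG.eigenvalues i = sigmaSq m v) ∧ (∏ i, hG.eigenvalues i = (pairProd m v)^2) := by
  intro A hG
  have hUnit := hG.eigenvectorUnitary.2
  constructor
  · have h1 : ((∑ i, hG.eigenvalues i : ℝ) : ℂ) = (Aᴴ * A).trace := by
      conv_rhs => rw [hG.spectral_theorem, Unitary.conjStarAlgAut_apply]
      rw [Matrix.trace_mul_cycle, (Matrix.mem_unitaryGroup_iff').mp hUnit, one_mul,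
        Matrix.trace_diagonal]
      push_cast
      rfl
    have h2 : (Aᴴ * A).trace = ((sigmaSq m v : ℝ) : ℂ) := by
      rw [Matrix.trace]
      simp only [Matrix.diag_apply, Matrix.mul_apply, Matrix.conjTranspose_apply,
        Matrix.transpose_apply, Matrix.vandermonde_apply, A]
      rw [sigmaSq]
      push_cast
      refine Finset.sum_congr rfl fun j _ => Finset.sum_congr rfl fun i _ => ?_
      rw [← Complex.ofReal_pow, Complex.star_def, Complex.conj_ofReal, ← Complex.ofReal_mul,
        ← pow_add, ← Complex.ofReal_pow]
      norm_num [two_mul]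
    exact Complex.ofReal_injective (h1.trans h2)
  · have h1 : ((∏ i, hG.eigenvalues i : ℝ) : ℂ) = (Aᴴ * A).det := by
      rw [hG.det_eq_prod_eigenvalues]
      push_cast
      rfl
    have hdetA : A.det = ((∏ i : Fin m, ∏ j ∈ Finset.Ioi i, (v j - v i) : ℝ) : ℂ) := by
      rw [Matrix.det_transpose, Matrix.det_vandermonde]
      push_cast
      rfl
    have h2 : (Aᴴ * A).det = (((pairProd m v)^2 : ℝ) : ℂ) := by
      rw [Matrix.det_mul, Matrix.det_conjTranspose, hdetA]
      rw [Complex.star_def, Complex.conj_ofReal, ← Complex.ofReal_mul]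
      congr 1
      rw [← sq, pairProd, prod_pairs_eq (fun i j => |v i - v j|)]
      have hsq : ∀ (g : Fin m → Fin m → ℝ),
          (∏ i, ∏ j ∈ Finset.Ioi i, g i j)^2 = ∏ i, ∏ j ∈ Finset.Ioi i, (g i j)^2 := fun g => by
        rw [← Finset.prod_pow]
        exact Finset.prod_congr rfl fun i _ => (Finset.prod_pow _ _ _).symm
      rw [hsq, hsq]
      refine Finset.prod_congr rfl fun i _ => Finset.prod_congr rfl fun j _ => ?_
      rw [sq_abs]
      ring
    exact Complex.ofReal_injective (h1.trans h2)

private lemma psi_sum (N : ℕ) (hN : 1 ≤ N) {γ : ℝ} (hγ : 0 < γ) :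
    ∑ r : Fin N, (γ ^ ((r.val : ℝ)/(N : ℝ)))^2 = PsiFn N γ := by
  have hN0 : (N : ℝ) ≠ 0 := Nat.cast_ne_zero.2 (by omega)
  have hq : ∀ r : ℕ, (γ ^ ((r : ℝ)/(N:ℝ)))^2 = (γ ^ ((2:ℝ)/(N:ℝ))) ^ r := by
    intro r
    rw [← Real.rpow_natCast (γ ^ ((2:ℝ)/(N:ℝ))) r, ← Real.rpow_natCast (γ ^ ((r:ℝ)/(N:ℝ))) 2,
      ← Real.rpow_mul hγ.le, ← Real.rpow_mul hγ.le]
    congr 1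
    push_cast
    ring
  have hqN : (γ ^ ((2:ℝ)/(N:ℝ))) ^ N = γ ^ 2 := by
    rw [← Real.rpow_natCast (γ ^ ((2:ℝ)/(N:ℝ))) N, ← Real.rpow_mul hγ.le,
      div_mul_cancel₀ _ hN0, ← Real.rpow_natCast γ 2]
    norm_num
  calc ∑ r : Fin N, (γ ^ ((r.val : ℝ)/(N : ℝ)))^2
      = ∑ r ∈ Finset.range N, (γ ^ ((2:ℝ)/(N:ℝ))) ^ r := by
        rw [← Fin.sum_univ_eq_sum_range (fun r => (γ ^ ((2:ℝ)/(N:ℝ))) ^ r) N]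
        exact Finset.sum_congr rfl fun r _ => hq r.val
    _ = PsiFn N γ := by
        by_cases h1 : γ = 1
        · subst h1
          simp [PsiFn, Real.one_rpow]
        · have hq1 : γ ^ ((2:ℝ)/(N:ℝ)) ≠ 1 := by
            intro h
            apply h1
            have h2 : ((γ ^ ((2:ℝ)/(N:ℝ))) ^ ((N:ℝ)/2) : ℝ) = γ := by
              rw [← Real.rpow_mul hγ.le]
              rw [show (2:ℝ)/(N:ℝ) * ((N:ℝ)/2) = 1 by field_simp]
              exact Real.rpow_one γ
            rw [← h2, h, Real.one_rpow]
          rw [geom_sum_eq hq1, PsiFn, if_neg h1, hqN]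
          rw [← neg_sub (1:ℝ) (γ^2), ← neg_sub (1:ℝ) (γ ^ ((2:ℝ)/(N:ℝ))), neg_div_neg_eq]

private lemma upperV (m : ℕ) (v : Fin m → ℝ) (y : Fin m → ℂ) :
    ∑ k : Fin m, ‖∑ j, ((v j ^ (k.val : ℕ) : ℝ) : ℂ) * y j‖^2
      ≤ sigmaSq m v * ∑ j, ‖y j‖^2 := by
  have step : ∀ k : Fin m, ‖∑ j, ((v j ^ (k.val : ℕ) : ℝ) : ℂ) * y j‖^2
      ≤ (∑ j, v j ^ (2*(k.val : ℕ))) * ∑ j, ‖y j‖^2 := by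
    intro k
    have h1 : ‖∑ j, ((v j ^ (k.val : ℕ) : ℝ) : ℂ) * y j‖ ≤ ∑ j, |v j ^ (k.val : ℕ)| * ‖y j‖ := by
      refine (norm_sum_le _ _).trans (le_of_eq ?_)
      refine Finset.sum_congr rfl fun j _ => ?_
      rw [norm_mul, Complex.norm_real, Real.norm_eq_abs]
    have h2 : (∑ j, |v j ^ (k.val : ℕ)| * ‖y j‖)^2
        ≤ (∑ j, |v j ^ (k.val : ℕ)|^2) * ∑ j, ‖y j‖^2 :=
      Finset.sum_mul_sq_le_sq_mul_sq _ _ _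
    calc ‖∑ j, ((v j ^ (k.val : ℕ) : ℝ) : ℂ) * y j‖^2
        ≤ (∑ j, |v j ^ (k.val : ℕ)| * ‖y j‖)^2 := by
          apply pow_le_pow_left₀ (norm_nonneg _) h1
      _ ≤ (∑ j, |v j ^ (k.val : ℕ)|^2) * ∑ j, ‖y j‖^2 := h2
      _ = (∑ j, v j ^ (2*(k.val : ℕ))) * ∑ j, ‖y j‖^2 := by
          congr 1
          exact Finset.sum_congr rfl fun j _ => by rw [sq_abs, ← pow_mul, mul_comm (k.val) 2]
  calc ∑ k : Fin m, ‖∑ j, ((v j ^ (k.val : ℕ) : ℝ) : ℂ) * y j‖^2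
      ≤ ∑ k : Fin m, (∑ j, v j ^ (2*(k.val : ℕ))) * ∑ j, ‖y j‖^2 :=
        Finset.sum_le_sum fun k _ => step k
    _ = sigmaSq m v * ∑ j, ‖y j‖^2 := by
        rw [← Finset.sum_mul, sigmaSq, Finset.sum_comm]

private lemma lowerV (m : ℕ) (hm : 1 ≤ m) (v : Fin m → ℝ) (hS : 0 < sigmaSq m v)
    (y : Fin m → ℂ) :
    ((((m:ℝ)-1)/sigmaSq m v) ^ (((m:ℝ)-1)) * (pairProd m v)^2) * ∑ j, ‖y j‖^2
      ≤ ∑ k : Fin m, ‖∑ j, ((v j ^ (k.val : ℕ) : ℝ) : ℂ) * y j‖^2 := by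
  set A : Matrix (Fin m) (Fin m) ℂ := (Matrix.vandermonde (fun j => (v j : ℂ)))ᵀ with hA
  have hPSD := Matrix.posSemidef_conjTranspose_mul_self A
  obtain ⟨htr, hdet⟩ := gram_facts m v
  have hc : ∀ i, (((m:ℝ)-1)/sigmaSq m v) ^ (((m:ℝ)-1)) * (pairProd m v)^2
      ≤ hPSD.1.eigenvalues i :=
    fun i => eig_min m hm hPSD.1.eigenvalues hPSD.eigenvalues_nonneg _ _ hS htr hdet i
  have hq := quad_lower hPSD.1 hc y
  have hid : (star y ⬝ᵥ ((Aᴴ * A) *ᵥ y)) = star (A *ᵥ y) ⬝ᵥ (A *ᵥ y) := by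
    rw [Matrix.star_mulVec, ← Matrix.dotProduct_mulVec, Matrix.mulVec_mulVec]
  have hre : (star y ⬝ᵥ ((Aᴴ * A) *ᵥ y)).re = ∑ k, ‖(A *ᵥ y) k‖^2 := by
    rw [hid, dotProduct, Complex.re_sum]
    exact Finset.sum_congr rfl fun k _ => star_mul_self_re _
  have hAv : ∀ k : Fin m, (A *ᵥ y) k = ∑ j, ((v j ^ (k.val : ℕ) : ℝ) : ℂ) * y j := by
    intro k
    simp only [hA, Matrix.mulVec, dotProduct, Matrix.transpose_apply,
      Matrix.vandermonde_apply]
    push_cast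
    rfl
  calc ((((m:ℝ)-1)/sigmaSq m v) ^ (((m:ℝ)-1)) * (pairProd m v)^2) * ∑ j, ‖y j‖^2
      ≤ (star y ⬝ᵥ ((Aᴴ * A) *ᵥ y)).re := hq
    _ = ∑ k, ‖(A *ᵥ y) k‖^2 := hre
    _ = ∑ k : Fin m, ‖∑ j, ((v j ^ (k.val : ℕ) : ℝ) : ℂ) * y j‖^2 :=
        Finset.sum_congr rfl fun k _ => by rw [hAv]


/-- Lemma on Vandermonde matrices (Lemma `lemV`). -/
theorem stmt1 (m N : ℕ) (hm : 1 ≤ m) (hN : 1 ≤ N)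
    (v : Fin m → ℝ) (hpos : ∀ j, 0 < v j) (hinj : Function.Injective v)
    (γlo γhi : ℝ)
    (hlo : IsLeast (Set.range v) γlo) (hhi : IsGreatest (Set.range v) γhi)
    (x : Fin m → ℂ) :
    ((((m:ℝ)-1)/sigmaSq m v) ^ (((m:ℝ)-1)/2) * pairProd m v)^2 * PsiFn N γlo *
        (∑ j, ‖x j‖^2)
      ≤ ∑ i, ‖(VandW m N v *ᵥ x) i‖^2
    ∧ ∑ i, ‖(VandW m N v *ᵥ x) i‖^2
      ≤ sigmaSq m v * PsiFn N γhi * (∑ j, ‖x j‖^2) := by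
  have hN0 : (N:ℝ) ≠ 0 := Nat.cast_ne_zero.2 (by omega)
  obtain ⟨j0, hj0⟩ := hlo.1
  obtain ⟨j1, hj1⟩ := hhi.1
  have hγlo : 0 < γlo := hj0 ▸ hpos j0
  have hγhi : 0 < γhi := hj1 ▸ hpos j1
  have hlo' : ∀ j, γlo ≤ v j := fun j => hlo.2 ⟨j, rfl⟩
  have hhi' : ∀ j, v j ≤ γhi := fun j => hhi.2 ⟨j, rfl⟩
  have hne : (Finset.univ : Finset (Fin m)).Nonempty := ⟨⟨0, by omega⟩, Finset.mem_univ _⟩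
  have hS : 0 < sigmaSq m v :=
    Finset.sum_pos (fun j _ => Finset.sum_pos (fun k _ => pow_pos (hpos j) _) hne) hne
  set S := sigmaSq m v
  set T := ∑ j, ‖x j‖^2 with hT
  set coeff := (((m:ℝ)-1)/S) ^ (((m:ℝ)-1)) * (pairProd m v)^2 with hcoeff
  have hm1 : (1:ℝ) ≤ (m:ℝ) := by exact_mod_cast hm
  have hcoeff_nn : 0 ≤ coeff :=
    mul_nonneg (Real.rpow_nonneg (div_nonneg (by linarith) hS.le) _) (sq_nonneg _)
  -- the vector scaled by v^{r/N}
  set y : Fin N → Fin m → ℂ :=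
    fun r j => ((v j ^ ((r.val : ℝ)/(N:ℝ)) : ℝ) : ℂ) * x j with hy
  have hynorm : ∀ (r : Fin N) (j : Fin m),
      ‖y r j‖^2 = (v j ^ ((r.val : ℝ)/(N:ℝ)))^2 * ‖x j‖^2 := by
    intro r j
    rw [hy]
    simp only [norm_mul, Complex.norm_real, Real.norm_eq_abs, mul_pow, sq_abs]
  -- splitting of the sum
  have hsplit : ∑ i, ‖(VandW m N v *ᵥ x) i‖^2
      = ∑ r : Fin N, ∑ k : Fin m, ‖∑ j, ((v j ^ (k.val : ℕ) : ℝ) : ℂ) * y r j‖^2 := by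
    have hW : ∀ i : Fin (m*N), (VandW m N v *ᵥ x) i
        = ∑ j, ((v j ^ ((i.val : ℝ)/(N:ℝ)) : ℝ) : ℂ) * x j := by
      intro i
      simp [VandW, Matrix.mulVec, dotProduct]
    calc ∑ i, ‖(VandW m N v *ᵥ x) i‖^2
        = ∑ i : Fin (m*N), ‖∑ j, ((v j ^ ((i.val : ℝ)/(N:ℝ)) : ℝ) : ℂ) * x j‖^2 :=
          Finset.sum_congr rfl fun i _ => by rw [hW]
      _ = ∑ p : Fin m × Fin N,
            ‖∑ j, ((v j ^ (((finProdFinEquiv p : Fin (m*N)).val : ℝ)/(N:ℝ)) : ℝ) : ℂ) * x j‖^2 :=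
          (Equiv.sum_comp finProdFinEquiv _).symm
      _ = ∑ k : Fin m, ∑ r : Fin N,
            ‖∑ j, ((v j ^ (((finProdFinEquiv (k, r) : Fin (m*N)).val : ℝ)/(N:ℝ)) : ℝ) : ℂ) * x j‖^2 :=
          Fintype.sum_prod_type _
      _ = ∑ r : Fin N, ∑ k : Fin m,
            ‖∑ j, ((v j ^ (((finProdFinEquiv (k, r) : Fin (m*N)).val : ℝ)/(N:ℝ)) : ℝ) : ℂ) * x j‖^2 :=
          Finset.sum_comm
      _ = ∑ r : Fin N, ∑ k : Fin m, ‖∑ j, ((v j ^ (k.val : ℕ) : ℝ) : ℂ) * y r j‖^2 := by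
          refine Finset.sum_congr rfl fun r _ => Finset.sum_congr rfl fun k _ => ?_
          refine congrArg (fun z : ℂ => ‖z‖^2) ?_
          refine Finset.sum_congr rfl fun j _ => ?_
          have hval : (((finProdFinEquiv (k, r) : Fin (m*N)).val : ℝ))/(N:ℝ)
              = (k.val : ℕ) + (r.val : ℝ)/(N:ℝ) := by
            simp only [finProdFinEquiv_apply_val]
            push_cast
            field_simp
            ring
          rw [hval, Real.rpow_add (hpos j), Real.rpow_natCast, hy]
          push_cast
          ring
  rw [hsplit]
  constructor
  · -- lower bound
    have hstep : ∀ r : Fin N, coeff * ((γlo ^ ((r.val : ℝ)/(N:ℝ)))^2 * T)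
        ≤ ∑ k : Fin m, ‖∑ j, ((v j ^ (k.val : ℕ) : ℝ) : ℂ) * y r j‖^2 := by
      intro r
      refine le_trans ?_ (lowerV m hm v hS (y r))
      apply mul_le_mul_of_nonneg_left ?_ hcoeff_nn
      rw [hT, Finset.mul_sum]
      refine Finset.sum_le_sum fun j _ => ?_
      rw [hynorm r j]
      apply mul_le_mul_of_nonneg_right ?_ (sq_nonneg _)
      apply pow_le_pow_left₀ (Real.rpow_nonneg hγlo.le _)
      exact Real.rpow_le_rpow hγlo.le (hlo' j) (by positivity)
    calc ((((m:ℝ)-1)/S) ^ (((m:ℝ)-1)/2) * pairProd m v)^2 * PsiFn N γlo * T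
        = coeff * PsiFn N γlo * T := by
          have hsq : ((((m:ℝ)-1)/S) ^ (((m:ℝ)-1)/2))^2
              = (((m:ℝ)-1)/S) ^ ((m:ℝ)-1) := by
            rw [← Real.rpow_natCast ((((m:ℝ)-1)/S) ^ (((m:ℝ)-1)/2)) 2,
              ← Real.rpow_mul (div_nonneg (by linarith) hS.le)]
            congr 1
            push_cast
            ring
          rw [hcoeff, mul_pow, hsq]
      _ = ∑ r : Fin N, coeff * ((γlo ^ ((r.val : ℝ)/(N:ℝ)))^2 * T) := by
          rw [← psi_sum N hN hγlo, mul_assoc, Finset.sum_mul, Finset.mul_sum]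
      _ ≤ _ := Finset.sum_le_sum fun r _ => hstep r
  · -- upper bound
    have hstep : ∀ r : Fin N,
        ∑ k : Fin m, ‖∑ j, ((v j ^ (k.val : ℕ) : ℝ) : ℂ) * y r j‖^2
          ≤ S * ((γhi ^ ((r.val : ℝ)/(N:ℝ)))^2 * T) := by
      intro r
      refine le_trans (upperV m v (y r)) ?_
      apply mul_le_mul_of_nonneg_left ?_ hS.le
      rw [hT, Finset.mul_sum]
      refine Finset.sum_le_sum fun j _ => ?_
      rw [hynorm r j]
      apply mul_le_mul_of_nonneg_right ?_ (sq_nonneg _)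
      apply pow_le_pow_left₀ (Real.rpow_nonneg (hpos j).le _)
      exact Real.rpow_le_rpow (hpos j).le (hhi' j) (by positivity)
    calc ∑ r : Fin N, ∑ k : Fin m, ‖∑ j, ((v j ^ (k.val : ℕ) : ℝ) : ℂ) * y r j‖^2
        ≤ ∑ r : Fin N, S * ((γhi ^ ((r.val : ℝ)/(N:ℝ)))^2 * T) :=
          Finset.sum_le_sum fun r _ => hstep r
      _ = S * PsiFn N γhi * T := by
          rw [← psi_sum N hN hγhi, mul_assoc, Finset.sum_mul, Finset.mul_sum]
end
end

section
/- Let m ≥ 2 and N ≥ 1 be integers, let 0 < ν ≤ 1, and let v_0, …, v_{m−1} be distinct real numbers with ν ≤ v_j ≤ 1 for all j. Define Ψ_N(t) = (1−t²)/(1−t^{2/N}) for t ∈ (0,1) and Ψ_N(1) = N, let W_N be the (mN)×m matrix with entries (W_N)_{ij} = v_j^{(i−1)/N} for 1 ≤ i ≤ mN and 0 ≤ j ≤ m−1, and set α̃ = e^{−1/2} m^{−(m−1)/2} ∏_{0≤j<k≤m−1} |v_j − v_k|. Then for every x ∈ ℂ^m, α̃² Ψ_N(ν) ‖x‖² ≤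 ‖W_N x‖² ≤ m² N ‖x‖². -/
open MeasureTheory Matrix
open scoped Real BigOperators

noncomputable section

section AuxStmt2
open Matrix

lemma star_mul_self_eq (z : ℂ) : star z * z = ((‖z‖^2 : ℝ) : ℂ) := by
  rw [Complex.star_def, mul_comm, Complex.mul_conj]
  norm_cast
  rw [Complex.normSq_eq_norm_sq]

-- quadratic form lower bound from eigenvalue lower bound
lemma quadform_lower {m : ℕ} (A : Matrix (Fin m) (Fin m) ℂ) (hA : A.IsHermitian)
    (c : ℝ) (hc : ∀ i, c ≤ hA.eigenvalues i) (x : Fin m → ℂ) :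
    c * ∑ j, ‖x j‖^2 ≤ (star x ⬝ᵥ (A *ᵥ x)).re := by
  classical
  set U : Matrix (Fin m) (Fin m) ℂ := (hA.eigenvectorUnitary : Matrix (Fin m) (Fin m) ℂ) with hU
  set y : Fin m → ℂ := star U *ᵥ x with hy
  have hUU : U * star U = 1 := (Matrix.mem_unitaryGroup_iff).mp hA.eigenvectorUnitary.2
  have hstar : star x ᵥ* U = star y := by
    rw [hy, Matrix.star_mulVec, Matrix.star_eq_conjTranspose,
      Matrix.conjTranspose_conjTranspose]
  have key : star x ⬝ᵥ (A *ᵥ x)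
      = ∑ i, ((hA.eigenvalues i : ℂ)) * (star (y i) * y i) := by
    conv_lhs => rw [hA.spectral_theorem, Unitary.conjStarAlgAut_apply]
    rw [← Matrix.mulVec_mulVec, ← Matrix.mulVec_mulVec, Matrix.dotProduct_mulVec, hstar]
    show star y ⬝ᵥ (Matrix.diagonal (RCLike.ofReal ∘ hA.eigenvalues) *ᵥ y) = _
    simp [Matrix.mulVec_diagonal, dotProduct, mul_comm, mul_left_comm, mul_assoc]
  have hnorm : ∑ i, ‖y i‖^2 = ∑ i, ‖x i‖^2 := by
    have h1 : star y ⬝ᵥ y = star x ⬝ᵥ x := by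
      have e : star y ⬝ᵥ y = (star x ᵥ* U) ⬝ᵥ (star U *ᵥ x) := by rw [hstar]
      rw [e, Matrix.dotProduct_mulVec, Matrix.vecMul_vecMul, hUU, Matrix.vecMul_one]
    have h2 : ∀ z : Fin m → ℂ, star z ⬝ᵥ z = ((∑ i, ‖z i‖^2 : ℝ) : ℂ) := by
      intro z
      rw [Complex.ofReal_sum]
      exact Finset.sum_congr rfl fun i _ => star_mul_self_eq (z i)
    rw [h2, h2] at h1
    exact_mod_cast congrArg Complex.re h1
  have key2 : (star x ⬝ᵥ (A *ᵥ x)).re = ∑ i, hA.eigenvalues i * ‖y i‖^2 := by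
    rw [key]
    rw [Complex.re_sum]
    refine Finset.sum_congr rfl fun i _ => ?_
    rw [star_mul_self_eq]
    norm_cast
  rw [key2, ← hnorm, Finset.mul_sum]
  exact Finset.sum_le_sum fun i _ =>
    mul_le_mul_of_nonneg_right (hc i) (by positivity)

lemma eig_lower {m : ℕ} (hm : 2 ≤ m) (lam : Fin m → ℝ) (hnn : ∀ i, 0 ≤ lam i)
    (htr : ∑ i, lam i ≤ (m:ℝ)^2) (P : ℝ)
    (hdet : ∏ i, lam i = P^2) (i : Fin m) :
    Real.exp (-1) * ((m:ℝ)^(m-1))⁻¹ * P^2 ≤ lam i := by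
  classical
  set n : ℕ := m - 1 with hn
  have hn1 : 1 ≤ n := by omega
  have hnpos : (0:ℝ) < n := by exact_mod_cast hn1
  have hmpos : (0:ℝ) < m := by positivity
  have hcard : (Finset.univ.erase i).card = n := by
    rw [Finset.card_erase_of_mem (Finset.mem_univ i), Finset.card_univ, Fintype.card_fin]
  set Q : ℝ := ∏ j ∈ Finset.univ.erase i, lam j with hQ
  have hQnn : 0 ≤ Q := Finset.prod_nonneg fun j _ => hnn j
  have hiQ : lam i * Q = P^2 := by
    rw [hQ, Finset.mul_prod_erase _ _ (Finset.mem_univ i), hdet]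
  -- AM-GM bound on Q
  have hQle : Q ≤ ((m:ℝ)^2/n)^n := by
    have hgm := Real.geom_mean_le_arith_mean_weighted (Finset.univ.erase i)
      (fun _ => (n:ℝ)⁻¹) lam (fun _ _ => by positivity)
      (by rw [Finset.sum_const, hcard, nsmul_eq_mul]; field_simp)
      (fun j _ => hnn j)
    have hlhs : ∏ j ∈ Finset.univ.erase i, lam j ^ ((n:ℝ)⁻¹)
        = Q ^ ((n:ℝ)⁻¹) := by
      rw [hQ, ← Real.finset_prod_rpow _ _ (fun j _ => hnn j)]
    have hrhs : ∑ j ∈ Finset.univ.erase i, (n:ℝ)⁻¹ * lam j ≤ (m:ℝ)^2/n := by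
      rw [← Finset.mul_sum]
      rw [div_eq_inv_mul]
      refine mul_le_mul_of_nonneg_left ?_ (by positivity)
      exact le_trans (Finset.sum_le_sum_of_subset_of_nonneg (Finset.subset_univ _)
        (fun j _ _ => hnn j)) htr
    have h1 : Q ^ ((n:ℝ)⁻¹) ≤ (m:ℝ)^2/n := hlhs ▸ le_trans hgm hrhs
    have h2 : (Q ^ ((n:ℝ)⁻¹))^(n:ℕ) ≤ ((m:ℝ)^2/n)^(n:ℕ) :=
      pow_le_pow_left₀ (Real.rpow_nonneg hQnn _) h1 n
    calc Q = (Q ^ ((n:ℝ)⁻¹))^(n:ℕ) := by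
            rw [← Real.rpow_natCast (Q ^ ((n:ℝ)⁻¹)) n, ← Real.rpow_mul hQnn,
              inv_mul_cancel₀ (ne_of_gt hnpos), Real.rpow_one]
      _ ≤ _ := h2
  -- the combinatorial inequality (m/n)^n ≤ e
  have hexp : ((m:ℝ)/n)^n ≤ Real.exp 1 := by
    have hmn : (m:ℝ)/n = 1 + (n:ℝ)⁻¹ := by
      have : (m:ℝ) = n + 1 := by
        rw [hn]; push_cast [Nat.cast_sub (by omega : 1 ≤ m)]; ring
      rw [this]; field_simp
    rw [hmn]
    calc (1 + (n:ℝ)⁻¹)^n ≤ (Real.exp ((n:ℝ)⁻¹))^n := by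
          apply pow_le_pow_left₀ (by positivity)
          rw [add_comm]
          exact Real.add_one_le_exp _
      _ = Real.exp 1 := by
          rw [← Real.exp_nat_mul, mul_inv_cancel₀ (ne_of_gt hnpos)]
  have hBpos : (0:ℝ) < ((m:ℝ)^2/n)^n := by positivity
  by_cases hP : P = 0
  · rw [hP]
    simpa using hnn i
  · have hP2 : 0 < P^2 := by positivity
    have hQpos : 0 < Q := by
      rcases hQnn.lt_or_eq with h | h
      · exact h
      · exfalso; rw [← h, mul_zero] at hiQ; exact hP2.ne (hiQ)
    have hlam : lam i = P^2 / Q := by field_simp [← hiQ]; exact hiQ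
    have step1 : P^2 / (((m:ℝ)^2/n)^n) ≤ lam i := by
      rw [hlam]
      exact div_le_div_of_nonneg_left hP2.le hQpos hQle
    refine le_trans ?_ step1
    have key : ((m:ℝ)^2/n)^n ≤ Real.exp 1 * (m:ℝ)^n := by
      have e : ((m:ℝ)^2/n)^n = ((m:ℝ)/n)^n * (m:ℝ)^n := by
        rw [← mul_pow]; congr 1; ring
      rw [e]; exact mul_le_mul_of_nonneg_right hexp (by positivity)
    have inv_key : (Real.exp 1 * (m:ℝ)^n)⁻¹ ≤ (((m:ℝ)^2/n)^n)⁻¹ :=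
      inv_anti₀ hBpos key
    have e2 : Real.exp (-1) * ((m:ℝ)^(m-1))⁻¹ = (Real.exp 1 * (m:ℝ)^n)⁻¹ := by
      rw [mul_inv, Real.exp_neg, ← hn]
    calc Real.exp (-1) * ((m:ℝ)^(m-1))⁻¹ * P^2
        = (Real.exp 1 * (m:ℝ)^n)⁻¹ * P^2 := by rw [e2]
      _ ≤ (((m:ℝ)^2/n)^n)⁻¹ * P^2 := mul_le_mul_of_nonneg_right inv_key hP2.le
      _ = P^2 / (((m:ℝ)^2/n)^n) := by rw [mul_comm]; ring

lemma prod_pairs' {M : Type*} [CommMonoid M] {m : ℕ} (f : Fin m → Fin m → M) :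
    ∏ p ∈ Finset.univ.filter (fun p : Fin m × Fin m => p.1 < p.2), f p.1 p.2
      = ∏ i, ∏ j ∈ Finset.Ioi i, f i j := by
  rw [Finset.prod_filter, ← Finset.univ_product_univ, Finset.prod_product]
  refine Finset.prod_congr rfl fun i _ => ?_
  rw [← Finset.prod_filter]
  congr 1
  ext j
  simp

lemma vand_lower {m : ℕ} (hm : 2 ≤ m) (v : Fin m → ℝ)
    (hbd : ∀ j, 0 ≤ v j ∧ v j ≤ 1) (y : Fin m → ℂ) :
    Real.exp (-1) * ((m:ℝ)^(m-1))⁻¹ * (pairProd m v)^2 * ∑ j, ‖y j‖^2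
      ≤ ∑ q, ‖(((Matrix.vandermonde v)ᵀ.map Complex.ofReal) *ᵥ y) q‖^2 := by
  classical
  set Vc : Matrix (Fin m) (Fin m) ℂ := (Matrix.vandermonde v)ᵀ.map Complex.ofReal with hVc
  set Mt : Matrix (Fin m) (Fin m) ℂ := Vcᴴ * Vc with hMt
  have hH : Mt.IsHermitian := Matrix.isHermitian_conjTranspose_mul_self Vc
  have heignn : ∀ i, 0 ≤ hH.eigenvalues i := fun i =>
    Matrix.eigenvalues_conjTranspose_mul_self_nonneg Vc i
  -- RHS as quadratic form
  have hq : (star y ⬝ᵥ (Mt *ᵥ y)) = ((∑ q, ‖(Vc *ᵥ y) q‖^2 : ℝ) : ℂ) := by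
    rw [hMt, ← Matrix.mulVec_mulVec, Matrix.dotProduct_mulVec, ← Matrix.star_mulVec,
      Complex.ofReal_sum]
    exact Finset.sum_congr rfl fun q _ => star_mul_self_eq _
  -- trace
  have htr_eig : ((∑ i, hH.eigenvalues i : ℝ) : ℂ) = Mt.trace := by
    conv_rhs => rw [hH.spectral_theorem, Unitary.conjStarAlgAut_apply]
    rw [Matrix.trace_mul_cycle,
      (Matrix.mem_unitaryGroup_iff').mp hH.eigenvectorUnitary.2, one_mul,
      Matrix.trace_diagonal]
    push_cast
    rfl
  have htrace : Mt.trace = ((∑ j, ∑ q : Fin m, (v j ^ (q:ℕ))^2 : ℝ) : ℂ) := by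
    rw [hMt]
    simp only [Matrix.trace, Matrix.diag_apply, Matrix.mul_apply, Matrix.conjTranspose_apply]
    push_cast
    refine Finset.sum_congr rfl fun j _ => Finset.sum_congr rfl fun q _ => ?_
    rw [show Vc q j = ((v j ^ (q:ℕ) : ℝ) : ℂ) from rfl, Complex.star_def, Complex.conj_ofReal]
    push_cast
    ring
  have htr : ∑ i, hH.eigenvalues i ≤ (m:ℝ)^2 := by
    have : ((∑ i, hH.eigenvalues i : ℝ) : ℂ) = ((∑ j, ∑ q : Fin m, (v j ^ (q:ℕ))^2 : ℝ) : ℂ) :=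
      htr_eig.trans htrace
    have heq := Complex.ofReal_injective this
    rw [heq]
    calc ∑ j, ∑ q : Fin m, (v j ^ (q:ℕ))^2 ≤ ∑ _j : Fin m, ∑ _q : Fin m, (1:ℝ) := by
          refine Finset.sum_le_sum fun j _ => Finset.sum_le_sum fun q _ => ?_
          have h1 : v j ^ (q:ℕ) ≤ 1 := pow_le_one₀ (hbd j).1 (hbd j).2
          have h0 : 0 ≤ v j ^ (q:ℕ) := pow_nonneg (hbd j).1 _
          nlinarith
      _ = (m:ℝ)^2 := by simp [sq]
  -- determinant
  have hdet : ∏ i, hH.eigenvalues i = (pairProd m v)^2 := by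
    have h1 : Mt.det = ((pairProd m v)^2 : ℝ) := by
      rw [hMt, Matrix.det_mul, Matrix.det_conjTranspose]
      have hdV : Vc.det = ((∏ i, ∏ j ∈ Finset.Ioi i, (v j - v i) : ℝ) : ℂ) := by
        rw [hVc, ← Matrix.det_vandermonde v, ← Matrix.det_transpose (Matrix.vandermonde v)]
        exact (RingHom.map_det Complex.ofRealHom _).symm
      rw [hdV, Complex.star_def, Complex.conj_ofReal, ← Complex.ofReal_mul]
      congr 1
      rw [← sq]
      rw [pairProd, prod_pairs' (fun i j => |v i - v j|)]
      rw [← Finset.prod_pow, ← Finset.prod_pow]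
      refine (Finset.prod_congr rfl fun i _ => ?_).symm
      rw [← Finset.prod_pow, ← Finset.prod_pow]
      refine Finset.prod_congr rfl fun j _ => ?_
      rw [sq_abs]
      ring
    have h2 : Mt.det = ((∏ i, hH.eigenvalues i : ℝ) : ℂ) := by
      rw [hH.det_eq_prod_eigenvalues]; push_cast; rfl
    have := h2.symm.trans h1
    exact_mod_cast this
  have hc : ∀ i, Real.exp (-1) * ((m:ℝ)^(m-1))⁻¹ * (pairProd m v)^2 ≤ hH.eigenvalues i :=
    fun i => eig_lower hm hH.eigenvalues heignn htr _ hdet i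
  have := quadform_lower Mt hH _ hc y
  calc Real.exp (-1) * ((m:ℝ)^(m-1))⁻¹ * (pairProd m v)^2 * ∑ j, ‖y j‖^2
      ≤ (star y ⬝ᵥ (Mt *ᵥ y)).re := this
    _ = ∑ q, ‖(Vc *ᵥ y) q‖^2 := by rw [hq, Complex.ofReal_re]

end AuxStmt2

/-- Corollary `corV`. -/
theorem stmt2 (m N : ℕ) (hm : 2 ≤ m) (hN : 1 ≤ N)
    (ν : ℝ) (hν0 : 0 < ν) (hν1 : ν ≤ 1)
    (v : Fin m → ℝ) (hinj : Function.Injective v)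
    (hbd : ∀ j, ν ≤ v j ∧ v j ≤ 1) (x : Fin m → ℂ) :
    (Real.exp (-(1/2)) * (m:ℝ) ^ (-(((m:ℝ)-1)/2)) * pairProd m v)^2 * PsiFn N ν *
        (∑ j, ‖x j‖^2)
      ≤ ∑ i, ‖(VandW m N v *ᵥ x) i‖^2
    ∧ ∑ i, ‖(VandW m N v *ᵥ x) i‖^2 ≤ (m:ℝ)^2 * (N:ℝ) * (∑ j, ‖x j‖^2) := by
  have hNpos : (0:ℝ) < N := by exact_mod_cast hN
  have hvpos : ∀ j, 0 < v j := fun j => lt_of_lt_of_le hν0 (hbd j).1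
  have hentry : ∀ (i : Fin (m*N)) (j : Fin m), v j ^ ((i.val : ℝ)/(N : ℝ)) ≤ 1 := by
    intro i j
    exact Real.rpow_le_one (hvpos j).le (hbd j).2 (by positivity)
  have hentry0 : ∀ (i : Fin (m*N)) (j : Fin m), 0 ≤ v j ^ ((i.val : ℝ)/(N : ℝ)) :=
    fun i j => Real.rpow_nonneg (hvpos j).le _
  constructor
  · -- lower bound
    set C : ℝ := Real.exp (-1) * ((m:ℝ)^(m-1))⁻¹ * (pairProd m v)^2 with hC
    have hCnn : 0 ≤ C := by positivity
    set r : ℝ := ν ^ ((2:ℝ)/(N:ℝ)) with hr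
    set Vc : Matrix (Fin m) (Fin m) ℂ := (Matrix.vandermonde v)ᵀ.map Complex.ofReal with hVc
    set z : Fin N → Fin m → ℂ :=
      fun s j => ((v j ^ ((s.val:ℝ)/(N:ℝ)) : ℝ) : ℂ) * x j with hz
    -- reindex the sum
    have hsum : ∑ i, ‖(VandW m N v *ᵥ x) i‖^2
        = ∑ s : Fin N, ∑ q : Fin m, ‖(Vc *ᵥ (z s)) q‖^2 := by
      calc ∑ i, ‖(VandW m N v *ᵥ x) i‖^2
          = ∑ p : Fin m × Fin N, ‖(VandW m N v *ᵥ x) (finProdFinEquiv p)‖^2 :=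
            (Equiv.sum_comp finProdFinEquiv _).symm
        _ = ∑ q : Fin m, ∑ s : Fin N, ‖(VandW m N v *ᵥ x) (finProdFinEquiv (q, s))‖^2 :=
            Fintype.sum_prod_type (f := fun p : Fin m × Fin N =>
              ‖(VandW m N v *ᵥ x) (finProdFinEquiv p)‖^2)
        _ = ∑ s : Fin N, ∑ q : Fin m, ‖(VandW m N v *ᵥ x) (finProdFinEquiv (q, s))‖^2 :=
            Finset.sum_comm
        _ = ∑ s : Fin N, ∑ q : Fin m, ‖(Vc *ᵥ (z s)) q‖^2 := by
            refine Finset.sum_congr rfl fun s _ => Finset.sum_congr rfl fun q _ => ?_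
            congr 1
            show ‖∑ j, VandW m N v (finProdFinEquiv (q, s)) j * x j‖
              = ‖∑ j, Vc q j * z s j‖
            congr 1
            refine Finset.sum_congr rfl fun j _ => ?_
            have hval : ((finProdFinEquiv (q, s) : Fin (m*N)).val : ℝ)
                = (s.val : ℝ) + (N:ℝ) * (q.val : ℝ) := by
              show ((s.val + N * q.val : ℕ) : ℝ) = _
              push_cast; ring
            have harg : ((finProdFinEquiv (q, s) : Fin (m*N)).val : ℝ)/(N:ℝ)
                = (q.val : ℝ) + (s.val:ℝ)/(N:ℝ) := by
              rw [hval]; field_simp; ring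
            have hreal : v j ^ (((finProdFinEquiv (q, s) : Fin (m*N)).val : ℝ)/(N:ℝ))
                = v j ^ (q.val:ℕ) * v j ^ ((s.val:ℝ)/(N:ℝ)) := by
              rw [harg, Real.rpow_add (hvpos j), Real.rpow_natCast]
            show ((v j ^ (((finProdFinEquiv (q, s) : Fin (m*N)).val : ℝ)/(N:ℝ)) : ℝ) : ℂ) * x j
              = ((v j ^ (q.val:ℕ) : ℝ) : ℂ) * (((v j ^ ((s.val:ℝ)/(N:ℝ)) : ℝ) : ℂ) * x j)
            rw [hreal]
            push_cast
            ring
    -- per-s lower bound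
    have hlow : ∀ s : Fin N, C * (r^(s.val) * ∑ j, ‖x j‖^2) ≤ ∑ q, ‖(Vc *ᵥ (z s)) q‖^2 := by
      intro s
      refine le_trans ?_ (vand_lower hm v (fun j => ⟨(hvpos j).le, (hbd j).2⟩) (z s))
      refine mul_le_mul_of_nonneg_left ?_ hCnn
      rw [Finset.mul_sum]
      refine Finset.sum_le_sum fun j _ => ?_
      have hnz : ‖z s j‖^2 = (v j ^ ((s.val:ℝ)/(N:ℝ)))^2 * ‖x j‖^2 := by
        rw [hz]
        rw [norm_mul, mul_pow, Complex.norm_real, Real.norm_eq_abs,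
          abs_of_nonneg (Real.rpow_nonneg (hvpos j).le _)]
      rw [hnz]
      refine mul_le_mul_of_nonneg_right ?_ (by positivity)
      have e1 : r^(s.val) = ν ^ ((2:ℝ)/(N:ℝ) * (s.val:ℝ)) := by
        rw [hr, Real.rpow_mul hν0.le, Real.rpow_natCast]
      have e2 : (v j ^ ((s.val:ℝ)/(N:ℝ)))^2 = v j ^ ((2:ℝ)/(N:ℝ) * (s.val:ℝ)) := by
        rw [show (2:ℝ)/(N:ℝ) * (s.val:ℝ) = (s.val:ℝ)/(N:ℝ) * ((2:ℕ):ℝ) by push_cast; ring,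
          Real.rpow_mul (hvpos j).le, Real.rpow_natCast]
      rw [e1, e2]
      exact Real.rpow_le_rpow hν0.le (hbd j).1 (by positivity)
    -- geometric sum
    have hpsi : PsiFn N ν = ∑ s : Fin N, r^(s.val) := by
      rw [Fin.sum_univ_eq_sum_range (fun s => r^s) N]
      by_cases hν : ν = 1
      · subst hν
        have hr1 : r = 1 := by rw [hr, Real.one_rpow]
        rw [hr1]
        simp [PsiFn]
      · have hνlt : ν < 1 := lt_of_le_of_ne hν1 hν
        have hrlt : r < 1 := Real.rpow_lt_one hν0.le hνlt (by positivity)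
        rw [geom_sum_eq (ne_of_lt hrlt)]
        rw [PsiFn, if_neg hν]
        have hrN : r^N = ν^2 := by
          rw [hr, ← Real.rpow_natCast (ν ^ ((2:ℝ)/(N:ℝ))) N, ← Real.rpow_mul hν0.le,
            div_mul_cancel₀ _ (ne_of_gt hNpos),
            show ((2:ℝ)) = ((2:ℕ):ℝ) by norm_num, Real.rpow_natCast]
        rw [hrN, ← hr, ← neg_sub (1:ℝ) (ν^2), ← neg_sub (1:ℝ) r, neg_div_neg_eq]
    -- the constant
    have hconst : (Real.exp (-(1/2)) * (m:ℝ) ^ (-(((m:ℝ)-1)/2)) * pairProd m v)^2 = C := by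
      have hm0 : (0:ℝ) ≤ m := Nat.cast_nonneg m
      have hm1 : ((m - 1 : ℕ) : ℝ) = (m:ℝ) - 1 := by
        have : (1:ℕ) ≤ m := by omega
        push_cast [Nat.cast_sub this]
        ring
      rw [hC, mul_pow, mul_pow]
      congr 2
      · rw [sq, ← Real.exp_add]
        norm_num
      · rw [← Real.rpow_natCast ((m:ℝ) ^ (-(((m:ℝ)-1)/2))) 2, ← Real.rpow_mul hm0]
        rw [show (-(((m:ℝ)-1)/2)) * ((2:ℕ):ℝ) = -((m:ℝ)-1) by push_cast; ring]
        rw [Real.rpow_neg hm0, ← hm1, Real.rpow_natCast]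
    calc (Real.exp (-(1/2)) * (m:ℝ) ^ (-(((m:ℝ)-1)/2)) * pairProd m v)^2 * PsiFn N ν *
          (∑ j, ‖x j‖^2)
        = ∑ s : Fin N, C * (r^(s.val) * ∑ j, ‖x j‖^2) := by
          rw [hconst, hpsi,
            Finset.mul_sum Finset.univ (fun s : Fin N => r^(s.val)) C, Finset.sum_mul]
          refine Finset.sum_congr rfl fun s _ => ?_
          ring
      _ ≤ ∑ s : Fin N, ∑ q : Fin m, ‖(Vc *ᵥ (z s)) q‖^2 :=
          Finset.sum_le_sum fun s _ => hlow s
      _ = ∑ i, ‖(VandW m N v *ᵥ x) i‖^2 := hsum.symm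
  · -- upper bound
    have h1 : ∀ i : Fin (m*N), ‖(VandW m N v *ᵥ x) i‖^2 ≤ (m:ℝ) * ∑ j, ‖x j‖^2 := by
      intro i
      have hb : ‖(VandW m N v *ᵥ x) i‖ ≤ ∑ j, ‖x j‖ := by
        show ‖∑ j, VandW m N v i j * x j‖ ≤ _
        refine le_trans (norm_sum_le _ _) ?_
        refine Finset.sum_le_sum fun j _ => ?_
        rw [norm_mul]
        have : ‖(VandW m N v) i j‖ ≤ 1 := by
          rw [show (VandW m N v) i j = (((v j ^ ((i.val : ℝ)/(N : ℝ))) : ℝ) : ℂ) from rfl]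
          rw [Complex.norm_real, Real.norm_eq_abs, abs_of_nonneg (hentry0 i j)]
          exact hentry i j
        calc ‖(VandW m N v) i j‖ * ‖x j‖ ≤ 1 * ‖x j‖ :=
              mul_le_mul_of_nonneg_right this (norm_nonneg _)
          _ = ‖x j‖ := one_mul _
      calc ‖(VandW m N v *ᵥ x) i‖^2 ≤ (∑ j, ‖x j‖)^2 := by
            apply pow_le_pow_left₀ (norm_nonneg _) hb
        _ ≤ (m:ℝ) * ∑ j, ‖x j‖^2 := by
            have := sq_sum_le_card_mul_sum_sq (s := (Finset.univ : Finset (Fin m)))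
              (f := fun j => ‖x j‖)
            simpa using this
    calc ∑ i, ‖(VandW m N v *ᵥ x) i‖^2 ≤ ∑ _i : Fin (m*N), ((m:ℝ) * ∑ j, ‖x j‖^2) :=
          Finset.sum_le_sum fun i _ => h1 i
      _ = (m:ℝ)^2 * (N:ℝ) * (∑ j, ‖x j‖^2) := by
          rw [Finset.sum_const, Finset.card_univ, Fintype.card_fin, nsmul_eq_mul]
          push_cast
          ring
end
end

section
/- Let c > 0, let φ ∈ Φ_c with φ̂ even on [−c,c], and let m ≥ 2 be an integer. Then there exists ξ ∈ [0,1] such that the sampled diffusion matrix ℬ_m(ξ) is not invertible; in particular inf_{ξ∈[0,1]} λ_min(ℬ_m(ξ)) = 0, where λ_min denotes the smallest eigenvalue of a positive semidefinite Hermitian matrix. -/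
open MeasureTheory Matrix
open scoped Real BigOperators

noncomputable section

lemma per_eq_of (c : ℝ) (hc : 0 < c) (g : ℝ → ℝ) (x : ℝ) (k : ℤ)
    (h1 : -c ≤ x - 2*c*(k:ℝ)) (h2 : x - 2*c*(k:ℝ) < c) :
    per c g x = g (x - 2*c*(k:ℝ)) := by
  have hk : ⌊(x + c)/(2*c)⌋ = k := by
    rw [Int.floor_eq_iff]
    constructor
    · rw [le_div_iff₀ (by linarith)]; linarith
    · rw [div_lt_iff₀ (by linarith)]; push_cast; linarith
  unfold per; rw [hk]

lemma per_abs_le (c : ℝ) (hc : 0 < c) (x : ℝ) :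
    |x - 2*c*((⌊(x + c)/(2*c)⌋ : ℤ) : ℝ)| ≤ c := by
  have h2c : (0:ℝ) < 2*c := by linarith
  have h1 : ((⌊(x + c)/(2*c)⌋ : ℤ) : ℝ) * (2*c) ≤ x + c :=
    (le_div_iff₀ h2c).mp (Int.floor_le ((x + c)/(2*c)))
  have h2 : x + c < (((⌊(x + c)/(2*c)⌋ : ℤ) : ℝ) + 1) * (2*c) :=
    (div_lt_iff₀ h2c).mp (Int.lt_floor_add_one ((x + c)/(2*c)))
  rw [abs_le]; constructor <;> nlinarith

lemma cont_rpow_base (a : ℝ) (ha : 0 < a) : Continuous fun t : ℝ => a ^ t := by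
  have : (fun t : ℝ => a ^ t) = fun t => Real.exp (Real.log a * t) := by
    funext t; rw [Real.rpow_def_of_pos ha]
  rw [this]
  exact Real.continuous_exp.comp (continuous_const.mul continuous_id)

/-- Remark `vecvsper`: for symmetric kernels the sampled diffusion matrix
degenerates at some `ξ ∈ [0,1]`, and `inf_ξ λ_min(ℬ_m(ξ)) = 0`. -/
theorem stmt4 (c : ℝ) (hc : 0 < c) (φ : ℝ → ℂ) (hφ : InPhi c φ)
    (heven : ∀ ξ : ℝ, |ξ| ≤ c → FT φ (-ξ) = FT φ ξ)
    (m : ℕ) (hm : 2 ≤ m) :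
    (∃ ξ ∈ Set.Icc (0:ℝ) 1, ¬ IsUnit (Bmat c (phihat φ) m ξ))
    ∧ sInf {r : ℝ | ∃ ξ ∈ Set.Icc (0:ℝ) 1, ∃ x : Fin m → ℂ,
          (∑ j, ‖x j‖^2) = 1 ∧ r = (star x ⬝ᵥ (Bmat c (phihat φ) m ξ *ᵥ x)).re} = 0 := by
  obtain ⟨hint, hft0, κ, hκ, hbound⟩ := hφ
  have hper : ∀ x : ℝ, κ ≤ per c (phihat φ) x ∧ per c (phihat φ) x ≤ 1 := by
    intro x
    have hyle : |x - 2*c*((⌊(x + c)/(2*c)⌋ : ℤ) : ℝ)| ≤ c := per_abs_le c hc x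
    have h := hbound _ hyle
    exact ⟨h.2.1, h.2.2⟩
  have hperpos : ∀ x : ℝ, 0 < per c (phihat φ) x :=
    fun x => lt_of_lt_of_le hκ (hper x).1
  have hm0 : (0:ℕ) < m := by omega
  have hmR : (0:ℝ) < (m:ℝ) := by exact_mod_cast hm0
  let j0 : Fin m := ⟨0, hm0⟩
  let k0 : Fin m := ⟨m-1, by omega⟩
  have hjk : j0 ≠ k0 := by
    simp only [j0, k0, Ne, Fin.mk.injEq]
    omega
  have hcm_pos : 0 < c/(m:ℝ) := div_pos hc hmR
  have hcm_lt : c/(m:ℝ) < c := by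
    rw [div_lt_iff₀ hmR]
    nlinarith [show (2:ℝ) ≤ (m:ℝ) by exact_mod_cast hm]
  -- key equality of the two `per` values at ξ = 1/2
  have key : per c (phihat φ) (2*c/(m:ℝ)*((1/2:ℝ) + (j0.val:ℝ)))
           = per c (phihat φ) (2*c/(m:ℝ)*((1/2:ℝ) + (k0.val:ℝ))) := by
    have hv0 : ((j0.val : ℕ) : ℝ) = 0 := by norm_num [j0]
    have hv1 : ((k0.val : ℕ) : ℝ) = (m:ℝ) - 1 := by
      have : (k0.val : ℕ) = m - 1 := rfl
      rw [this, Nat.cast_sub (by omega)]; norm_num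
    have e0 : 2*c/(m:ℝ)*((1/2:ℝ) + (j0.val:ℝ)) = c/(m:ℝ) := by
      rw [hv0]; ring
    have e1 : 2*c/(m:ℝ)*((1/2:ℝ) + (k0.val:ℝ)) = 2*c - c/(m:ℝ) := by
      rw [hv1]; field_simp; ring
    rw [e0, e1,
      per_eq_of c hc _ (c/(m:ℝ)) 0 (by push_cast; linarith) (by push_cast; linarith),
      per_eq_of c hc _ (2*c - c/(m:ℝ)) 1 (by push_cast; linarith) (by push_cast; linarith)]
    have harg : 2*c - c/(m:ℝ) - 2*c*((1:ℤ):ℝ) = -(c/(m:ℝ)) := by push_cast; ring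
    have harg0 : c/(m:ℝ) - 2*c*((0:ℤ):ℝ) = c/(m:ℝ) := by push_cast; ring
    rw [harg, harg0]
    have habs : |c/(m:ℝ)| ≤ c := by
      rw [abs_of_pos hcm_pos]; exact le_of_lt hcm_lt
    simp only [phihat]
    rw [heven _ habs]
  have hB : ∀ i : Fin m, Bmat c (phihat φ) m (1/2) i j0 = Bmat c (phihat φ) m (1/2) i k0 := by
    intro i
    simp only [Bmat, Matrix.of_apply]
    rw [key]
  have hdet : (Bmat c (phihat φ) m (1/2)).det = 0 :=
    Matrix.det_zero_of_column_eq hjk hB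
  have hnotunit : ¬ IsUnit (Bmat c (phihat φ) m (1/2)) := by
    rw [Matrix.isUnit_iff_isUnit_det, hdet]
    simp
  have hhalf : (1/2:ℝ) ∈ Set.Icc (0:ℝ) 1 := by constructor <;> norm_num
  -- the witness unit vector
  have hs2 : ((Real.sqrt 2)⁻¹ : ℝ)^2 = 1/2 := by
    rw [inv_pow, Real.sq_sqrt (by norm_num : (0:ℝ) ≤ 2)]
    norm_num
  set v : Fin m → ℂ :=
    fun j => if j = j0 then (((Real.sqrt 2)⁻¹ : ℝ) : ℂ)
             else if j = k0 then -(((Real.sqrt 2)⁻¹ : ℝ) : ℂ) else 0 with hv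
  have hnormv : (∑ j, ‖v j‖^2) = 1 := by
    have hterm : ∀ j, ‖v j‖^2
        = (if j = j0 then (1/2:ℝ) else 0) + (if j = k0 then (1/2:ℝ) else 0) := by
      intro j
      by_cases h1 : j = j0
      · subst h1
        simp [hv, hjk, Complex.norm_real, abs_of_nonneg (inv_nonneg.mpr (Real.sqrt_nonneg 2)),
          hs2, if_neg hjk]
      · by_cases h2 : j = k0
        · subst h2
          simp [hv, h1, Complex.norm_real,
            abs_of_nonneg (inv_nonneg.mpr (Real.sqrt_nonneg 2)), hs2]
        · simp [hv, h1, h2]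
    rw [Finset.sum_congr rfl (fun j _ => hterm j), Finset.sum_add_distrib,
      Finset.sum_ite_eq' Finset.univ j0 (fun _ => (1/2:ℝ)),
      Finset.sum_ite_eq' Finset.univ k0 (fun _ => (1/2:ℝ))]
    simp
    norm_num
  have hmv : Bmat c (phihat φ) m (1/2) *ᵥ v = 0 := by
    funext i
    show ∑ k, Bmat c (phihat φ) m (1/2) i k * v k = 0
    have hterm : ∀ k, Bmat c (phihat φ) m (1/2) i k * v k
        = (if k = j0 then Bmat c (phihat φ) m (1/2) i j0 * (((Real.sqrt 2)⁻¹ : ℝ) : ℂ) else 0)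
          + (if k = k0 then Bmat c (phihat φ) m (1/2) i k0 * (-(((Real.sqrt 2)⁻¹ : ℝ) : ℂ)) else 0) := by
      intro k
      by_cases h1 : k = j0
      · subst h1; simp [hv, if_neg hjk]
      · by_cases h2 : k = k0
        · subst h2; simp [hv, h1]
        · simp [hv, h1, h2]
    rw [Finset.sum_congr rfl (fun k _ => hterm k), Finset.sum_add_distrib,
      Finset.sum_ite_eq' Finset.univ j0, Finset.sum_ite_eq' Finset.univ k0]
    simp only [Finset.mem_univ, if_true, hB i]
    ring
  -- nonnegativity of the quadratic form
  have hnonneg : ∀ ξ : ℝ, ∀ x : Fin m → ℂ,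
      0 ≤ (star x ⬝ᵥ (Bmat c (phihat φ) m ξ *ᵥ x)).re := by
    intro ξ x
    set a : Fin m → ℝ := fun j => per c (phihat φ) (2*c/(m:ℝ)*(ξ + (j.val:ℝ))) with ha
    have hapos : ∀ j, 0 < a j := fun j => hperpos _
    have hBjk : ∀ j k : Fin m, Bmat c (phihat φ) m ξ j k
        = (((∫ t in (0:ℝ)..1, a j ^ t * a k ^ t) : ℝ) : ℂ) := fun j k => rfl
    have hR : ∀ (z : ℂ) (r : ℝ), (z * (r:ℂ)).re = z.re * r := by
      intro z r; simp [Complex.mul_re]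
    have expand : (star x ⬝ᵥ (Bmat c (phihat φ) m ξ *ᵥ x)).re
        = ∑ j : Fin m, ∑ k : Fin m,
            ((starRingEnd ℂ) (x j) * x k).re * ∫ t in (0:ℝ)..1, a j ^ t * a k ^ t := by
      simp only [dotProduct, Matrix.mulVec, Pi.star_apply, Finset.mul_sum,
        Complex.re_sum]
      refine Finset.sum_congr rfl fun j _ => ?_
      refine Finset.sum_congr rfl fun k _ => ?_
      rw [hBjk]
      have : star (x j) * ((((∫ t in (0:ℝ)..1, a j ^ t * a k ^ t) : ℝ) : ℂ) * x k)
          = ((starRingEnd ℂ) (x j) * x k) * (((∫ t in (0:ℝ)..1, a j ^ t * a k ^ t) : ℝ) : ℂ) := by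
        simp only [Complex.star_def]; ring
      rw [this, hR]
    rw [expand]
    have hcont : ∀ j k : Fin m, IntervalIntegrable
        (fun t : ℝ => ((starRingEnd ℂ) (x j) * x k).re * (a j ^ t * a k ^ t))
        MeasureTheory.volume (0:ℝ) 1 :=
      fun j k => (continuous_const.mul
        ((cont_rpow_base _ (hapos j)).mul (cont_rpow_base _ (hapos k)))).intervalIntegrable 0 1
    have hcont2 : ∀ j : Fin m, IntervalIntegrable
        (fun t : ℝ => ∑ k : Fin m, ((starRingEnd ℂ) (x j) * x k).re * (a j ^ t * a k ^ t))
        MeasureTheory.volume (0:ℝ) 1 :=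
      fun j => (continuous_finset_sum _ (fun k _ => continuous_const.mul
        ((cont_rpow_base _ (hapos j)).mul (cont_rpow_base _ (hapos k))))).intervalIntegrable 0 1
    have hptnn : ∀ t : ℝ,
        0 ≤ ∑ j : Fin m, ∑ k : Fin m, ((starRingEnd ℂ) (x j) * x k).re * (a j ^ t * a k ^ t) := by
      intro t
      set w : ℂ := ∑ j : Fin m, x j * ((a j ^ t : ℝ) : ℂ) with hw
      have hwre : ((starRingEnd ℂ) w * w).re = Complex.normSq w := by
        rw [mul_comm, Complex.mul_conj, Complex.ofReal_re]
      have hrw : ∑ j : Fin m, ∑ k : Fin m,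
          ((starRingEnd ℂ) (x j) * x k).re * (a j ^ t * a k ^ t)
          = ((starRingEnd ℂ) w * w).re := by
        rw [hw, map_sum, Finset.sum_mul_sum, Complex.re_sum]
        refine Finset.sum_congr rfl fun j _ => ?_
        rw [Complex.re_sum]
        refine Finset.sum_congr rfl fun k _ => ?_
        have : (starRingEnd ℂ) (x j * ((a j ^ t : ℝ) : ℂ)) * (x k * ((a k ^ t : ℝ) : ℂ))
            = ((starRingEnd ℂ) (x j) * x k) * (((a j ^ t * a k ^ t : ℝ)) : ℂ) := by
          rw [_root_.map_mul, Complex.conj_ofReal]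
          push_cast
          ring
        rw [this, hR]
      rw [hrw, hwre]
      exact Complex.normSq_nonneg w
    calc (0:ℝ)
        ≤ ∫ t in (0:ℝ)..1, ∑ j : Fin m, ∑ k : Fin m,
            ((starRingEnd ℂ) (x j) * x k).re * (a j ^ t * a k ^ t) :=
          intervalIntegral.integral_nonneg (by norm_num) (fun t _ => hptnn t)
      _ = ∑ j : Fin m, ∑ k : Fin m,
            ((starRingEnd ℂ) (x j) * x k).re * ∫ t in (0:ℝ)..1, a j ^ t * a k ^ t := by
          rw [intervalIntegral.integral_finset_sum (fun j _ => hcont2 j)]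
          refine Finset.sum_congr rfl fun j _ => ?_
          rw [intervalIntegral.integral_finset_sum (fun k _ => hcont j k)]
          exact Finset.sum_congr rfl fun k _ => intervalIntegral.integral_const_mul _ _
  refine ⟨⟨1/2, hhalf, hnotunit⟩, ?_⟩
  have h0mem : (0:ℝ) ∈ {r : ℝ | ∃ ξ ∈ Set.Icc (0:ℝ) 1, ∃ x : Fin m → ℂ,
      (∑ j, ‖x j‖^2) = 1 ∧ r = (star x ⬝ᵥ (Bmat c (phihat φ) m ξ *ᵥ x)).re} := by
    refine ⟨1/2, hhalf, v, hnormv, ?_⟩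
    rw [hmv]
    simp
  have hlb : ∀ r ∈ {r : ℝ | ∃ ξ ∈ Set.Icc (0:ℝ) 1, ∃ x : Fin m → ℂ,
      (∑ j, ‖x j‖^2) = 1 ∧ r = (star x ⬝ᵥ (Bmat c (phihat φ) m ξ *ᵥ x)).re}, (0:ℝ) ≤ r := by
    rintro r ⟨ξ, _, x, _, rfl⟩
    exact hnonneg ξ x
  exact le_antisymm (csInf_le ⟨0, hlb⟩ h0mem) (le_csInf ⟨0, h0mem⟩ hlb)
end
end

section
/- For every k ∈ ℕ and every x ∈ ℝ, the Legendre polynomial P_k satisfies |∫_{−1}^1 e^{ixy} P_k(y) dy| ≤ √2 · e^{k+3/2} · |x|^k / (2k+3)^{k+1}. -/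
open MeasureTheory Matrix
open scoped Real BigOperators

noncomputable section

section AuxStmt14
open Filter Polynomial intervalIntegral



noncomputable def Rseq (k : ℕ) : ℝ :=
  Real.sqrt 2 * Real.exp ((k:ℝ) + 3/2) * (Nat.factorial (2*k+1)) /
    (2^(k+1) * Nat.factorial k * (2*(k:ℝ)+3)^(k+1))

lemma Rseq_pos (k : ℕ) : 0 < Rseq k := by
  unfold Rseq
  positivity

lemma key_exp (k : ℕ) : Real.exp (1/((k:ℝ)+2)) * (2*(k:ℝ)+3) ≤ 2*(k:ℝ)+5 := by
  set x : ℝ := 1/((k:ℝ)+2) with hxdef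
  have hk0 : (0:ℝ) ≤ (k:ℝ) := Nat.cast_nonneg k
  have hx0 : 0 < x := by positivity
  have hx1 : x ≤ 1 := by
    rw [hxdef]
    rw [div_le_one (by positivity)]
    linarith
  have hb := Real.exp_bound' hx0.le hx1 (n := 3) (by norm_num)
  have hsum : (∑ m ∈ Finset.range 3, x ^ m / (Nat.factorial m : ℝ)) = 1 + x + x^2/2 := by
    simp [Finset.sum_range_succ, Nat.factorial]
  rw [hsum] at hb
  have hb' : Real.exp x ≤ 1 + x + x^2/2 + 2*x^3/9 := by
    calc Real.exp x ≤ 1 + x + x^2/2 + x^3*(3+1)/((Nat.factorial 3 : ℝ)*3) := hb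
    _ = 1 + x + x^2/2 + 2*x^3/9 := by norm_num [Nat.factorial]; ring
  have hxk : x * ((k:ℝ)+2) = 1 := by
    rw [hxdef]; field_simp
  nlinarith [pow_pos hx0 3, pow_pos hx0 4, sq_nonneg x]

lemma Rseq_antitone : Antitone Rseq := by
  apply antitone_nat_of_succ_le
  intro k
  have hk0 : (0:ℝ) ≤ (k:ℝ) := Nat.cast_nonneg k
  rw [Rseq, Rseq, div_le_div_iff₀ (by positivity) (by positivity)]
  have hfac : (Nat.factorial (2*(k+1)+1) : ℝ) = (2*(k:ℝ)+3)*(2*(k:ℝ)+2)*(Nat.factorial (2*k+1)) := by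
    have : 2*(k+1)+1 = (2*k+2)+1 := by ring
    rw [this]
    rw [Nat.factorial_succ]
    have : (2*k+2) = (2*k+1)+1 := by ring
    rw [this, Nat.factorial_succ]
    push_cast
    ring
  have hfac2 : (Nat.factorial (k+1) : ℝ) = ((k:ℝ)+1) * Nat.factorial k := by
    rw [Nat.factorial_succ]; push_cast; ring
  have hexp : Real.exp ((↑(k+1):ℝ) + 3/2) = Real.exp 1 * Real.exp ((k:ℝ)+3/2) := by
    rw [← Real.exp_add]; push_cast; ring_nf
  have hpow : Real.exp 1 * (2*(k:ℝ)+3)^(k+2) ≤ (2*(k:ℝ)+5)^(k+2) := by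
    have h1 : Real.exp 1 = (Real.exp (1/((k:ℝ)+2)))^(k+2) := by
      rw [← Real.exp_nat_mul]
      congr 1
      field_simp
      norm_cast
    have h2 : (Real.exp (1/((k:ℝ)+2)) * (2*(k:ℝ)+3))^(k+2) ≤ (2*(k:ℝ)+5)^(k+2) := by
      apply pow_le_pow_left₀ (by positivity) (key_exp k)
    calc Real.exp 1 * (2*(k:ℝ)+3)^(k+2) = (Real.exp (1/((k:ℝ)+2)) * (2*(k:ℝ)+3))^(k+2) := by
          rw [mul_pow, ← h1]
      _ ≤ (2*(k:ℝ)+5)^(k+2) := h2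
  rw [hfac, hfac2, hexp]
  push_cast
  have hE : (0:ℝ) < Real.exp ((k:ℝ)+3/2) := Real.exp_pos _
  have hF1 : (0:ℝ) < (Nat.factorial (2*k+1) : ℝ) := by positivity
  have hF2 : (0:ℝ) < (Nat.factorial k : ℝ) := by positivity
  -- goal: sqrt2 * (e * E) * (A*B*F1) * (2^(k+1) * F2 * (2k+3)^(k+1)) ≤ sqrt2 * E * F1 * (2^(k+2) * ((k+1)*F2) * (2k+5)^(k+2))
  have h2 : Real.sqrt 2 * (Real.exp 1 * Real.exp ((k:ℝ)+3/2)) *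
      ((2*(k:ℝ)+3)*(2*(k:ℝ)+2)*(Nat.factorial (2*k+1))) *
      (2^(k+1) * (Nat.factorial k) * (2*(k:ℝ)+3)^(k+1))
      = (Real.sqrt 2 * Real.exp ((k:ℝ)+3/2) * (Nat.factorial (2*k+1)) *
        (2^(k+1) * (Nat.factorial k))) * (2*(k:ℝ)+2) * (Real.exp 1 * (2*(k:ℝ)+3)^(k+2)) := by
    ring
  have h3 : Real.sqrt 2 * Real.exp ((k:ℝ)+3/2) * (Nat.factorial (2*k+1)) *
      (2^(k+1+1) * (((k:ℝ)+1) * (Nat.factorial k)) * (2*((k:ℝ)+1)+3)^(k+1+1))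
      = (Real.sqrt 2 * Real.exp ((k:ℝ)+3/2) * (Nat.factorial (2*k+1)) *
        (2^(k+1) * (Nat.factorial k))) * (2*(k:ℝ)+2) * ((2*(k:ℝ)+5)^(k+2)) := by
    ring
  calc Real.sqrt 2 * (Real.exp 1 * Real.exp ((k:ℝ)+3/2)) *
      ((2*(k:ℝ)+3)*(2*(k:ℝ)+2)*(Nat.factorial (2*k+1))) *
      (2^(k+1) * (Nat.factorial k) * (2*(k:ℝ)+3)^(k+1))
      = (Real.sqrt 2 * Real.exp ((k:ℝ)+3/2) * (Nat.factorial (2*k+1)) *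
        (2^(k+1) * (Nat.factorial k))) * (2*(k:ℝ)+2) * (Real.exp 1 * (2*(k:ℝ)+3)^(k+2)) := h2
    _ ≤ (Real.sqrt 2 * Real.exp ((k:ℝ)+3/2) * (Nat.factorial (2*k+1)) *
        (2^(k+1) * (Nat.factorial k))) * (2*(k:ℝ)+2) * ((2*(k:ℝ)+5)^(k+2)) := by
        apply mul_le_mul_of_nonneg_left hpow
        positivity
    _ = Real.sqrt 2 * Real.exp ((k:ℝ)+3/2) * (Nat.factorial (2*k+1)) *
      (2^(k+1+1) * (((k:ℝ)+1) * (Nat.factorial k)) * (2*((k:ℝ)+1)+3)^(k+1+1)) := h3.symm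

lemma log_Rseq (k : ℕ) (hk : 1 ≤ k) :
    Real.log (Rseq k) =
      (Real.log (Stirling.stirlingSeq (2*k+1)) - Real.log (Stirling.stirlingSeq k))
      + (1/2) * (Real.log ((2*(k:ℝ)+1)/k) - Real.log 2) + 1/2
      + (k:ℝ) * Real.log (1 + (1/2)/(k:ℝ))
      - ((k:ℝ)+1) * Real.log (1 + 1/((k:ℝ)+1/2)) := by
  have hk0 : (1:ℝ) ≤ (k:ℝ) := by exact_mod_cast hk
  have hkpos : (0:ℝ) < (k:ℝ) := by linarith
  have hfact : ∀ n : ℕ, 1 ≤ n → Real.log (Nat.factorial n) =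
      Real.log (Stirling.stirlingSeq n) + 1/2 * Real.log (2*n) + n * Real.log ((n:ℝ)/Real.exp 1) := by
    intro n hn
    have := Stirling.log_stirlingSeq_formula n
    linarith
  have h1 := hfact (2*k+1) (by omega)
  have h2 := hfact k hk
  have e1 : Real.log (Rseq k) = (1/2)*Real.log 2 + ((k:ℝ)+3/2)
      + Real.log (Nat.factorial (2*k+1)) - ((k:ℝ)+1)*Real.log 2
      - Real.log (Nat.factorial k) - ((k:ℝ)+1)*Real.log (2*(k:ℝ)+3) := by
    unfold Rseq
    simp (disch := positivity) only [Real.log_div, Real.log_mul, Real.log_pow,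
      Real.log_sqrt, Real.log_exp]
    push_cast
    ring
  rw [e1, h1, h2]
  have c1 : ((2*k+1 : ℕ) : ℝ) = 2*(k:ℝ)+1 := by push_cast; ring
  rw [c1]
  have l1 : Real.log (2*(2*(k:ℝ)+1)) = Real.log 2 + Real.log (2*(k:ℝ)+1) := by
    rw [← Real.log_mul (by norm_num) (by positivity)]
  have l2 : Real.log (2*(k:ℝ)) = Real.log 2 + Real.log (k:ℝ) := by
    rw [← Real.log_mul (by norm_num) (by positivity)]
  have l3 : Real.log ((2*(k:ℝ)+1)/Real.exp 1) = Real.log (2*(k:ℝ)+1) - 1 := by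
    rw [Real.log_div (by positivity) (Real.exp_ne_zero 1), Real.log_exp]
  have l4 : Real.log ((k:ℝ)/Real.exp 1) = Real.log (k:ℝ) - 1 := by
    rw [Real.log_div (by positivity) (Real.exp_ne_zero 1), Real.log_exp]
  have l5 : Real.log ((2*(k:ℝ)+1)/(k:ℝ)) = Real.log (2*(k:ℝ)+1) - Real.log (k:ℝ) :=
    Real.log_div (by positivity) (by positivity)
  have e2 : (1:ℝ) + (1/2)/(k:ℝ) = (2*(k:ℝ)+1)/(2*(k:ℝ)) := by field_simp
  have l6 : Real.log (1 + (1/2)/(k:ℝ)) = Real.log (2*(k:ℝ)+1) - (Real.log 2 + Real.log (k:ℝ)) := by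
    rw [e2, Real.log_div (by positivity) (by positivity), l2]
  have e3 : (1:ℝ) + 1/((k:ℝ)+1/2) = (2*(k:ℝ)+3)/(2*(k:ℝ)+1) := by
    have h5 : ((k:ℝ)+1/2) ≠ 0 := by positivity
    field_simp
    ring
  have l7 : Real.log (1 + 1/((k:ℝ)+1/2)) = Real.log (2*(k:ℝ)+3) - Real.log (2*(k:ℝ)+1) := by
    rw [e3, Real.log_div (by positivity) (by positivity)]
  rw [l1, l2, l3, l4, l5, l6, l7]
  ring

lemma Rseq_tendsto : Tendsto Rseq atTop (nhds 1) := by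
  have hπ : Real.sqrt Real.pi ≠ 0 := by positivity
  have hs := Stirling.tendsto_stirlingSeq_sqrt_pi
  have h2k : Tendsto (fun k : ℕ => 2*k+1) atTop atTop := by
    apply tendsto_atTop_mono (fun k => by omega : ∀ k : ℕ, k ≤ 2*k+1) tendsto_id
  have hA1 : Tendsto (fun k : ℕ => Real.log (Stirling.stirlingSeq (2*k+1))) atTop
      (nhds (Real.log (Real.sqrt Real.pi))) :=
    ((Real.continuousAt_log hπ).tendsto.comp (hs.comp h2k))
  have hA2 : Tendsto (fun k : ℕ => Real.log (Stirling.stirlingSeq k)) atTop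
      (nhds (Real.log (Real.sqrt Real.pi))) :=
    ((Real.continuousAt_log hπ).tendsto.comp hs)
  have hcast : Tendsto (fun k : ℕ => (k:ℝ)) atTop atTop := tendsto_natCast_atTop_atTop
  have hB : Tendsto (fun k : ℕ => Real.log ((2*(k:ℝ)+1)/(k:ℝ))) atTop (nhds (Real.log 2)) := by
    have hq : Tendsto (fun k : ℕ => (2*(k:ℝ)+1)/(k:ℝ)) atTop (nhds 2) := by
      have : ∀ᶠ k : ℕ in atTop, (2*(k:ℝ)+1)/(k:ℝ) = 2 + 1/(k:ℝ) := by
        filter_upwards [eventually_ge_atTop 1] with k hk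
        have : (0:ℝ) < (k:ℝ) := by exact_mod_cast hk
        field_simp
      rw [tendsto_congr' this]
      have := tendsto_one_div_atTop_nhds_zero_nat (𝕜 := ℝ)
      simpa using (tendsto_const_nhds (x := (2:ℝ))).add this
    exact ((Real.continuousAt_log (by norm_num)).tendsto.comp hq)
  have hC : Tendsto (fun k : ℕ => (k:ℝ) * Real.log (1 + (1/2)/(k:ℝ))) atTop (nhds (1/2)) :=
    (Real.tendsto_mul_log_one_add_div_atTop (1/2)).comp hcast
  have hhalf : Tendsto (fun k : ℕ => (k:ℝ)+1/2) atTop atTop :=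
    tendsto_atTop_add_const_right _ _ hcast
  have hD1 : Tendsto (fun k : ℕ => ((k:ℝ)+1/2) * Real.log (1 + 1/((k:ℝ)+1/2))) atTop (nhds 1) := by
    have := (Real.tendsto_mul_log_one_add_div_atTop 1).comp hhalf
    simpa [Function.comp_def] using this
  have hD2 : Tendsto (fun k : ℕ => Real.log (1 + 1/((k:ℝ)+1/2))) atTop (nhds 0) := by
    have hq : Tendsto (fun k : ℕ => 1 + 1/((k:ℝ)+1/2)) atTop (nhds 1) := by
      have := hhalf.inv_tendsto_atTop
      simpa [one_div] using (tendsto_const_nhds (x := (1:ℝ))).add this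
    have := (Real.continuousAt_log (by norm_num)).tendsto.comp hq
    simpa [Function.comp_def] using this
  have hD : Tendsto (fun k : ℕ => ((k:ℝ)+1) * Real.log (1 + 1/((k:ℝ)+1/2))) atTop (nhds 1) := by
    have : ∀ k : ℕ, ((k:ℝ)+1) * Real.log (1 + 1/((k:ℝ)+1/2))
        = ((k:ℝ)+1/2) * Real.log (1 + 1/((k:ℝ)+1/2)) + (1/2) * Real.log (1 + 1/((k:ℝ)+1/2)) := by
      intro k; ring
    simp_rw [this]
    have := hD1.add ((tendsto_const_nhds (x := (1/2:ℝ))).mul hD2)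
    simpa using this
  have hlog : Tendsto (fun k : ℕ => Real.log (Rseq k)) atTop (nhds 0) := by
    have hF : Tendsto (fun k : ℕ =>
        (Real.log (Stirling.stirlingSeq (2*k+1)) - Real.log (Stirling.stirlingSeq k))
        + (1/2) * (Real.log ((2*(k:ℝ)+1)/(k:ℝ)) - Real.log 2) + 1/2
        + (k:ℝ) * Real.log (1 + (1/2)/(k:ℝ))
        - ((k:ℝ)+1) * Real.log (1 + 1/((k:ℝ)+1/2))) atTop (nhds 0) := by
      have h0 := ((((hA1.sub hA2).add
        (((hB.sub (tendsto_const_nhds (x := Real.log 2))).const_mul (1/2 : ℝ)))).add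
        (tendsto_const_nhds (x := (1/2:ℝ)))).add hC).sub hD
      have he : (Real.log (Real.sqrt Real.pi) - Real.log (Real.sqrt Real.pi)
          + 1/2*(Real.log 2 - Real.log 2) + 1/2 + 1/2) - 1 = 0 := by ring
      rw [he] at h0
      exact h0
    apply hF.congr' ?_
    filter_upwards [eventually_ge_atTop 1] with k hk
    exact (log_Rseq k hk).symm
  have : Tendsto (fun k : ℕ => Real.exp (Real.log (Rseq k))) atTop (nhds (Real.exp 0)) :=
    (Real.continuous_exp.tendsto 0).comp hlog
  rw [Real.exp_zero] at this
  apply this.congr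
  intro k
  exact Real.exp_log (Rseq_pos k)


lemma one_le_Rseq (k : ℕ) : 1 ≤ Rseq k :=
  Rseq_antitone.le_of_tendsto Rseq_tendsto k

-- the integral of (1-y^2)^k

lemma integral_one_sub_sq_pow (k : ℕ) :
    ∫ y in (-1:ℝ)..1, (1-y^2)^k
      = 2^(2*k+1)*((Nat.factorial k : ℝ))^2/(Nat.factorial (2*k+1)) := by
  induction k with
  | zero => norm_num
  | succ k ih =>
    have cont : ∀ m : ℕ, Continuous (fun y : ℝ => (1-y^2)^m) := by
      intro m; fun_prop
    have hd : ∀ y : ℝ, HasDerivAt (fun y : ℝ => y*(1-y^2)^(k+1))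
        ((2*(k:ℝ)+3)*(1-y^2)^(k+1) - (2*(k:ℝ)+2)*(1-y^2)^k) y := by
      intro y
      have h1 : HasDerivAt (fun y : ℝ => (1-y^2)) (-(2*y)) y := by
        simpa using ((hasDerivAt_pow 2 y).const_sub 1)
      have h2 : HasDerivAt (fun y : ℝ => (1-y^2)^(k+1))
          ((k+1 : ℕ)*(1-y^2)^k * (-(2*y))) y := h1.pow (k+1)
      have h3 := (hasDerivAt_id y).mul h2
      refine h3.congr_deriv ?_
      simp only [id_eq]
      push_cast
      ring
    have hzero : (∫ y in (-1:ℝ)..1,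
        ((2*(k:ℝ)+3)*(1-y^2)^(k+1) - (2*(k:ℝ)+2)*(1-y^2)^k)) = 0 := by
      rw [integral_eq_sub_of_hasDerivAt (fun y _ => hd y)]
      · norm_num
      · apply Continuous.intervalIntegrable; fun_prop
    rw [intervalIntegral.integral_sub, intervalIntegral.integral_const_mul,
        intervalIntegral.integral_const_mul] at hzero
    · have h4 : (2*(k:ℝ)+3) * ∫ y in (-1:ℝ)..1, (1-y^2)^(k+1)
          = (2*(k:ℝ)+2) * ∫ y in (-1:ℝ)..1, (1-y^2)^k := by linarith
      have h5 : (∫ y in (-1:ℝ)..1, (1-y^2)^(k+1))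
          = (2*(k:ℝ)+2)/(2*(k:ℝ)+3) * ∫ y in (-1:ℝ)..1, (1-y^2)^k := by
        rw [div_mul_eq_mul_div, eq_div_iff (by positivity)]
        linarith
      rw [h5, ih]
      have hf1 : (Nat.factorial (2*(k+1)+1) : ℝ)
          = (2*(k:ℝ)+3)*(2*(k:ℝ)+2)*(Nat.factorial (2*k+1)) := by
        have e : 2*(k+1)+1 = (2*k+1)+1+1 := by ring
        rw [e, Nat.factorial_succ, Nat.factorial_succ]
        push_cast; ring
      have hf2 : (Nat.factorial (k+1) : ℝ) = ((k:ℝ)+1)*(Nat.factorial k) := by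
        rw [Nat.factorial_succ]; push_cast; ring
      rw [hf1, hf2]
      have hne1 : (Nat.factorial (2*k+1) : ℝ) ≠ 0 := by positivity
      have hne2 : (2*(k:ℝ)+3) ≠ 0 := by positivity
      field_simp
      ring
    · exact (continuous_const.mul (cont (k+1))).intervalIntegrable _ _
    · exact (continuous_const.mul (cont k)).intervalIntegrable _ _

-- roots of iterated derivatives
lemma eval_iter_deriv_zero (k m : ℕ) (hm : m < k) (t : ℝ) (ht : t = 1 ∨ t = -1) :
    Polynomial.eval t (Polynomial.derivative^[m] ((Polynomial.X^2 - 1)^k : Polynomial ℝ)) = 0 := by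
  have hp : ((Polynomial.X^2 - 1)^k : Polynomial ℝ) ≠ 0 := by
    intro h
    have := congrArg (Polynomial.eval (2:ℝ)) h
    simp at this
    nlinarith [this]
  apply Polynomial.isRoot_iterate_derivative_of_lt_rootMultiplicity
  refine lt_of_lt_of_le hm ?_
  rw [Polynomial.le_rootMultiplicity_iff hp]
  have hdvd : (Polynomial.X - Polynomial.C t) ∣ ((Polynomial.X^2 - 1) : Polynomial ℝ) := by
    rw [Polynomial.dvd_iff_isRoot]
    rcases ht with h | h <;> simp [h]
  calc (Polynomial.X - Polynomial.C t)^k ∣ ((Polynomial.X^2-1))^k := pow_dvd_pow_of_dvd hdvd k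

-- integration by parts step
lemma ibp_step (x : ℝ) (p : Polynomial ℝ)
    (h1 : Polynomial.eval (1:ℝ) p = 0) (h2 : Polynomial.eval (-1:ℝ) p = 0) :
    (∫ y in (-1:ℝ)..1, Complex.exp (Complex.I*x*y) *
        ((Polynomial.eval y (Polynomial.derivative p) : ℝ) : ℂ))
      = (-(Complex.I*x)) * ∫ y in (-1:ℝ)..1, Complex.exp (Complex.I*x*y) *
        ((Polynomial.eval y p : ℝ) : ℂ) := by
  have hu : ∀ y ∈ Set.uIcc (-1:ℝ) 1, HasDerivAt (fun y : ℝ => Complex.exp (Complex.I*x*y))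
      (Complex.I*x*Complex.exp (Complex.I*x*y)) y := by
    intro y _
    have h : HasDerivAt (fun z : ℂ => Complex.exp (Complex.I*x*z))
        (Complex.exp (Complex.I*x*y) * (Complex.I*x)) (y:ℂ) := by
      simpa using ((hasDerivAt_id (y:ℂ)).const_mul (Complex.I*(x:ℂ))).cexp
    have := h.comp_ofReal
    simpa [mul_comm] using this
  have hv : ∀ y ∈ Set.uIcc (-1:ℝ) 1, HasDerivAt (fun y : ℝ => ((Polynomial.eval y p : ℝ) : ℂ))
      ((Polynomial.eval y (Polynomial.derivative p) : ℝ) : ℂ) y := by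
    intro y _
    exact (p.hasDerivAt y).ofReal_comp
  have hiu : IntervalIntegrable (fun y : ℝ => Complex.I*x*Complex.exp (Complex.I*x*y))
      volume (-1) 1 := by
    apply Continuous.intervalIntegrable
    fun_prop
  have hiv : IntervalIntegrable (fun y : ℝ => ((Polynomial.eval y (Polynomial.derivative p) : ℝ) : ℂ))
      volume (-1) 1 := by
    apply Continuous.intervalIntegrable
    fun_prop
  have key := intervalIntegral.integral_mul_deriv_eq_deriv_mul hu hv hiu hiv
  rw [key, h1, h2]
  simp only [Complex.ofReal_zero, mul_zero, zero_sub, sub_zero, neg_zero, zero_mul]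
  rw [← intervalIntegral.integral_const_mul]
  rw [← intervalIntegral.integral_neg]
  congr 1
  funext y
  ring

lemma ibp_iter (x : ℝ) (k : ℕ) :
    (∫ y in (-1:ℝ)..1, Complex.exp (Complex.I*x*y) *
        ((Polynomial.eval y (Polynomial.derivative^[k] ((Polynomial.X^2-1)^k : Polynomial ℝ)) : ℝ) : ℂ))
      = (-(Complex.I*x))^k * ∫ y in (-1:ℝ)..1, Complex.exp (Complex.I*x*y) *
        ((Polynomial.eval y ((Polynomial.X^2-1)^k : Polynomial ℝ) : ℝ) : ℂ) := by
  suffices h : ∀ j, j ≤ k → (∫ y in (-1:ℝ)..1, Complex.exp (Complex.I*x*y) *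
      ((Polynomial.eval y (Polynomial.derivative^[j] ((Polynomial.X^2-1)^k : Polynomial ℝ)) : ℝ) : ℂ))
      = (-(Complex.I*x))^j * ∫ y in (-1:ℝ)..1, Complex.exp (Complex.I*x*y) *
        ((Polynomial.eval y ((Polynomial.X^2-1)^k : Polynomial ℝ) : ℝ) : ℂ) by
    exact h k le_rfl
  intro j hj
  induction j with
  | zero => simp
  | succ j ihj =>
    have hj' : j < k := by omega
    rw [Function.iterate_succ_apply']
    rw [ibp_step x _ (eval_iter_deriv_zero k j hj' 1 (Or.inl rfl))
        (eval_iter_deriv_zero k j hj' (-1) (Or.inr rfl))]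
    rw [ihj (by omega)]
    ring

lemma partA (k : ℕ) (x : ℝ) :
    ‖∫ y in (-1:ℝ)..1, Complex.exp (Complex.I * x * y) *
        ((Polynomial.eval y (legendreP k) : ℝ) : ℂ)‖
      ≤ |x|^k * (2^(k+1) * (Nat.factorial k : ℝ) / (Nat.factorial (2*k+1) : ℝ)) := by
  set c : ℝ := 1/((2:ℝ)^k * (Nat.factorial k : ℝ)) with hc
  have hc0 : 0 < c := by positivity
  have hsplit : (∫ y in (-1:ℝ)..1, Complex.exp (Complex.I * x * y) *
      ((Polynomial.eval y (legendreP k) : ℝ) : ℂ))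
      = (c : ℂ) * ∫ y in (-1:ℝ)..1, Complex.exp (Complex.I * x * y) *
        ((Polynomial.eval y (Polynomial.derivative^[k] ((Polynomial.X^2-1)^k : Polynomial ℝ)) : ℝ) : ℂ) := by
    rw [← intervalIntegral.integral_const_mul]
    apply intervalIntegral.integral_congr
    intro y _
    simp only [legendreP, Polynomial.eval_mul, Polynomial.eval_C, Complex.ofReal_mul]
    ring_nf
    rw [hc]; push_cast; simp only [one_div, mul_inv, inv_pow]; ring
  rw [hsplit, ibp_iter x k]
  rw [norm_mul, norm_mul, norm_pow]
  have hnc : ‖(c:ℂ)‖ = c := by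
    rw [Complex.norm_real, Real.norm_eq_abs, abs_of_pos hc0]
  have hnIx : ‖-(Complex.I*(x:ℂ))‖ = |x| := by
    rw [norm_neg, norm_mul, Complex.norm_I, one_mul, Complex.norm_real, Real.norm_eq_abs]
  rw [hnc, hnIx]
  have hJ : ‖∫ y in (-1:ℝ)..1, Complex.exp (Complex.I*x*y) *
      ((Polynomial.eval y ((Polynomial.X^2-1)^k : Polynomial ℝ) : ℝ) : ℂ)‖
      ≤ 2^(2*k+1)*((Nat.factorial k : ℝ))^2/(Nat.factorial (2*k+1)) := by
    calc ‖∫ y in (-1:ℝ)..1, Complex.exp (Complex.I*x*y) *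
        ((Polynomial.eval y ((Polynomial.X^2-1)^k : Polynomial ℝ) : ℝ) : ℂ)‖
        ≤ ∫ y in (-1:ℝ)..1, ‖Complex.exp (Complex.I*x*y) *
          ((Polynomial.eval y ((Polynomial.X^2-1)^k : Polynomial ℝ) : ℝ) : ℂ)‖ :=
          intervalIntegral.norm_integral_le_integral_norm (by norm_num)
      _ = ∫ y in (-1:ℝ)..1, (1-y^2)^k := by
          apply intervalIntegral.integral_congr
          intro y hy
          simp only [Set.uIcc_of_le (by norm_num : (-1:ℝ) ≤ 1), Set.mem_Icc] at hy
          show ‖Complex.exp (Complex.I*x*y) *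
            ((Polynomial.eval y ((Polynomial.X^2-1)^k : Polynomial ℝ) : ℝ) : ℂ)‖ = (1-y^2)^k
          rw [norm_mul]
          have he : ‖Complex.exp (Complex.I*x*y)‖ = 1 := by
            rw [Complex.norm_exp]
            have : (Complex.I*x*y).re = 0 := by simp
            rw [this, Real.exp_zero]
          rw [he, one_mul, Complex.norm_real, Real.norm_eq_abs]
          have hev : Polynomial.eval y ((Polynomial.X^2-1)^k : Polynomial ℝ) = (y^2-1)^k := by
            simp
          rw [hev, _root_.abs_pow, abs_sub_comm]
          have h1 : |1 - y^2| = 1 - y^2 := by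
            apply _root_.abs_of_nonneg
            nlinarith [hy.1, hy.2]
          rw [h1]
      _ = 2^(2*k+1)*((Nat.factorial k : ℝ))^2/(Nat.factorial (2*k+1)) :=
          integral_one_sub_sq_pow k
  calc c * (|x|^k * ‖∫ y in (-1:ℝ)..1, Complex.exp (Complex.I*x*y) *
      ((Polynomial.eval y ((Polynomial.X^2-1)^k : Polynomial ℝ) : ℝ) : ℂ)‖)
      ≤ c * (|x|^k * (2^(2*k+1)*((Nat.factorial k : ℝ))^2/(Nat.factorial (2*k+1)))) := by
        apply mul_le_mul_of_nonneg_left _ hc0.le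
        exact mul_le_mul_of_nonneg_left hJ (by positivity)
    _ = |x|^k * (2^(k+1) * (Nat.factorial k : ℝ) / (Nat.factorial (2*k+1) : ℝ)) := by
        rw [hc]
        have h1 : ((2:ℝ))^(2*k+1) = 2^k * 2^(k+1) := by
          rw [← pow_add]; congr 1; ring
        rw [h1]
        have hne : ((Nat.factorial k : ℝ)) ≠ 0 := by positivity
        field_simp

end AuxStmt14

/-- the bound `|∫_{-1}^1 e^{ixy}P_k(y) dy| ≤ √2·e^{k+3/2}·|x|^k/(2k+3)^{k+1}`. -/
theorem stmt14 (k : ℕ) (x : ℝ) :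
    ‖∫ y in (-1:ℝ)..1, Complex.exp (Complex.I * x * y) *
        ((Polynomial.eval y (legendreP k) : ℝ) : ℂ)‖
      ≤ Real.sqrt 2 * Real.exp ((k:ℝ) + 3/2) * |x|^k / (2*(k:ℝ)+3)^(k+1) := by
  have hA := partA k x
  have hB : 2^(k+1) * (Nat.factorial k : ℝ) / (Nat.factorial (2*k+1) : ℝ)
      ≤ Real.sqrt 2 * Real.exp ((k:ℝ) + 3/2) / (2*(k:ℝ)+3)^(k+1) := by
    have h1 := one_le_Rseq k
    rw [Rseq, le_div_iff₀ (by positivity), one_mul] at h1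
    rw [div_le_div_iff₀ (by positivity) (by positivity)]
    nlinarith [h1]
  calc ‖∫ y in (-1:ℝ)..1, Complex.exp (Complex.I * x * y) *
        ((Polynomial.eval y (legendreP k) : ℝ) : ℂ)‖
      ≤ |x|^k * (2^(k+1) * (Nat.factorial k : ℝ) / (Nat.factorial (2*k+1) : ℝ)) := hA
    _ ≤ |x|^k * (Real.sqrt 2 * Real.exp ((k:ℝ) + 3/2) / (2*(k:ℝ)+3)^(k+1)) := by
        apply mul_le_mul_of_nonneg_left hB (by positivity)
    _ = Real.sqrt 2 * Real.exp ((k:ℝ) + 3/2) * |x|^k / (2*(k:ℝ)+3)^(k+1) := by ring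
end
end

section
/- Let c > 0, L > 0, and let φ ∈ Φ_c be such that φ̂ is C¹-smooth on [−c,c]. Then there exists a finite constant C_{φ,L} > 0 such that for every x ∈ ℝ, ∫₀^L |(sinc(c·) * φ_t)(x)|² dt ≤ C_{φ,L}/(1+x²), where (sinc(c·) * φ_t)(x) = (1/(2c)) ∫_{−c}^{c} φ̂(ξ)^t e^{ixξ} dξ. -/
open MeasureTheory Matrix
open scoped Real BigOperators

noncomputable section

open Set

-- bound 1 : trivial bound
lemma aux_triv (c : ℝ) (hc : 0 < c) (g : ℝ → ℝ) (t : ℝ) (ht : 0 ≤ t)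
    (hub : ∀ ξ ∈ Icc (-c) c, g ξ ≤ 1) (hlb0 : ∀ ξ ∈ Icc (-c) c, 0 ≤ g ξ) (x : ℝ) :
    ‖sincConv c g t x‖ ≤ 1 := by
  have h2c : (0:ℝ) < 2*c := by linarith
  have hbd : ∀ ξ ∈ Set.uIoc (-c) c,
      ‖(((g ξ) ^ t : ℝ) : ℂ) * Complex.exp (Complex.I * x * ξ)‖ ≤ 1 := by
    intro ξ hξ
    have hξ' : ξ ∈ Icc (-c) c := by
      rw [Set.uIoc_of_le (by linarith : (-c) ≤ c)] at hξ
      exact ⟨le_of_lt hξ.1, hξ.2⟩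
    have he : ‖Complex.exp (Complex.I * x * ξ)‖ = 1 := by
      rw [Complex.norm_exp]
      simp [Complex.mul_re, Complex.mul_im]
    rw [norm_mul, he, mul_one, Complex.norm_real, Real.norm_eq_abs,
      abs_of_nonneg (Real.rpow_nonneg (hlb0 ξ hξ') t)]
    exact Real.rpow_le_one (hlb0 ξ hξ') (hub ξ hξ') ht
  have := intervalIntegral.norm_integral_le_of_norm_le_const (C := 1) hbd
  rw [sincConv, norm_mul]
  have : ‖∫ ξ in (-c)..c, (((g ξ) ^ t : ℝ) : ℂ) * Complex.exp (Complex.I * x * ξ)‖ ≤ 2*c := by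
    have h : |c - -c| = 2*c := by rw [abs_of_pos (by linarith)]; ring
    calc _ ≤ 1 * |c - -c| := this
      _ = 2*c := by rw [h]; ring
  calc ‖((1/(2*c):ℝ):ℂ)‖ * ‖∫ ξ in (-c)..c, (((g ξ) ^ t : ℝ) : ℂ) * Complex.exp (Complex.I * x * ξ)‖
      ≤ (1/(2*c)) * (2*c) := by
        apply mul_le_mul _ this (norm_nonneg _) (by positivity)
        rw [Complex.norm_real, Real.norm_eq_abs, abs_of_pos (by positivity)]
    _ = 1 := by field_simp

-- bound 2 : decay bound via integration by parts
lemma aux_ibp (c κ L M : ℝ) (hc : 0 < c) (hκ : 0 < κ) (hL : 0 < L) (hM : 0 ≤ M)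
    (g : ℝ → ℝ) (hg : ContDiffOn ℝ 1 g (Icc (-c) c))
    (hlb : ∀ ξ ∈ Icc (-c) c, κ ≤ g ξ) (hub : ∀ ξ ∈ Icc (-c) c, g ξ ≤ 1)
    (hMb : ∀ ξ ∈ Icc (-c) c, |derivWithin g (Icc (-c) c) ξ| ≤ M)
    (t x : ℝ) (ht0 : 0 ≤ t) (htL : t ≤ L) (hx : x ≠ 0) :
    ‖∫ ξ in (-c)..c, (((g ξ) ^ t : ℝ) : ℂ) * Complex.exp (Complex.I * x * ξ)‖
      ≤ (2 + 2*c*L*M/κ)/|x| := by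
  have hcc : (-c) ≤ c := by linarith
  have huIcc : Set.uIcc (-c) c = Icc (-c) c := Set.uIcc_of_le hcc
  have hIxne : (Complex.I * (x:ℂ)) ≠ 0 := by
    simp [Complex.I_ne_zero, Complex.ofReal_eq_zero, hx]
  set g' : ℝ → ℝ := derivWithin g (Icc (-c) c) with hg'def
  set u : ℝ → ℂ := fun ξ => (((g ξ) ^ t : ℝ) : ℂ) with hu_def
  set u' : ℝ → ℂ := fun ξ => ((g' ξ * t * (g ξ) ^ (t-1) : ℝ) : ℂ) with hu'_def
  set v : ℝ → ℂ := fun ξ => Complex.exp (Complex.I * x * ξ) / (Complex.I * x) with hv_def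
  set v' : ℝ → ℂ := fun ξ => Complex.exp (Complex.I * x * ξ) with hv'_def
  have hgpos : ∀ ξ ∈ Icc (-c) c, 0 < g ξ := fun ξ hξ => lt_of_lt_of_le hκ (hlb ξ hξ)
  -- derivative of u
  have hu : ∀ ξ ∈ Set.uIcc (-c) c, HasDerivWithinAt u (u' ξ) (Set.uIcc (-c) c) ξ := by
    intro ξ hξ
    rw [huIcc] at hξ ⊢
    have hd : HasDerivWithinAt g (g' ξ) (Icc (-c) c) ξ :=
      ((hg.differentiableOn one_ne_zero) ξ hξ).hasDerivWithinAt
    have hr : HasDerivWithinAt (fun y => (g y) ^ t) (g' ξ * t * (g ξ) ^ (t-1)) (Icc (-c) c) ξ :=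
      hd.rpow_const (Or.inl (ne_of_gt (hgpos ξ hξ)))
    have := Complex.ofRealCLM.hasDerivAt.scomp_hasDerivWithinAt ξ hr
    simpa [u, u', Complex.real_smul] using! this
  -- derivative of v
  have hv : ∀ ξ ∈ Set.uIcc (-c) c, HasDerivWithinAt v (v' ξ) (Set.uIcc (-c) c) ξ := by
    intro ξ _
    have h1 : HasDerivAt (fun y : ℝ => Complex.I * (x:ℂ) * (y:ℂ)) (Complex.I * x) ξ := by
      simpa using (Complex.ofRealCLM.hasDerivAt (x := ξ)).const_mul (Complex.I * (x:ℂ))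
    have h2 : HasDerivAt (fun y : ℝ => Complex.exp (Complex.I * x * y))
        (Complex.exp (Complex.I * x * ξ) * (Complex.I * x)) ξ := h1.cexp
    have h3 := h2.div_const (Complex.I * (x:ℂ))
    have : HasDerivAt v (Complex.exp (Complex.I * x * ξ)) ξ := by
      rw [mul_div_cancel_right₀ _ hIxne] at h3
      exact h3
    exact this.hasDerivWithinAt
  -- integrability
  have hgcont : ContinuousOn g (Icc (-c) c) := hg.continuousOn
  have hg'cont : ContinuousOn g' (Icc (-c) c) :=
    hg.continuousOn_derivWithin (uniqueDiffOn_Icc (by linarith : (-c) < c)) le_rfl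
  have hu'int : IntervalIntegrable u' volume (-c) c := by
    apply ContinuousOn.intervalIntegrable
    rw [huIcc]
    apply Complex.continuous_ofReal.comp_continuousOn
    exact (hg'cont.mul continuousOn_const).mul
      (hgcont.rpow_const fun ξ hξ => Or.inl (ne_of_gt (hgpos ξ hξ)))
  have hv'int : IntervalIntegrable v' volume (-c) c := by
    apply ContinuousOn.intervalIntegrable
    apply Continuous.continuousOn
    exact Complex.continuous_exp.comp (by continuity)
  -- integration by parts
  have hibp := intervalIntegral.integral_mul_deriv_eq_deriv_mul_of_hasDerivWithinAt hu hv hu'int hv'int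
  -- norms of pieces
  have hvnorm : ∀ ξ : ℝ, ‖v ξ‖ = 1/|x| := by
    intro ξ
    simp only [hv_def]
    rw [norm_div]
    have h1 : ‖Complex.exp (Complex.I * x * ξ)‖ = 1 := by
      rw [Complex.norm_exp]
      simp [Complex.mul_re, Complex.mul_im]
    have h2 : ‖Complex.I * (x:ℂ)‖ = |x| := by
      rw [norm_mul]; simp
    rw [h1, h2]
  have hunorm : ∀ ξ ∈ Icc (-c) c, ‖u ξ‖ ≤ 1 := by
    intro ξ hξ
    simp only [hu_def]
    simp only [Complex.norm_real, Real.norm_eq_abs,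
      abs_of_nonneg (Real.rpow_nonneg (le_of_lt (hgpos ξ hξ)) t)]
    exact Real.rpow_le_one (le_of_lt (hgpos ξ hξ)) (hub ξ hξ) ht0
  have hu'norm : ∀ ξ ∈ Icc (-c) c, ‖u' ξ‖ ≤ L * M / κ := by
    intro ξ hξ
    have hgp := hgpos ξ hξ
    have h1 : (g ξ) ^ (t-1) ≤ 1/κ := by
      rw [Real.rpow_sub hgp, Real.rpow_one]
      apply div_le_div₀ (by norm_num) (Real.rpow_le_one hgp.le (hub ξ hξ) ht0) hκ (hlb ξ hξ)
    simp only [hu'_def]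
    simp only [Complex.norm_real, Real.norm_eq_abs]
    rw [abs_mul, abs_mul, abs_of_nonneg ht0,
      abs_of_nonneg (Real.rpow_nonneg hgp.le _)]
    calc |g' ξ| * t * (g ξ) ^ (t-1) ≤ M * L * (1/κ) := by
          apply mul_le_mul (mul_le_mul (hMb ξ hξ) htL ht0 hM) h1
            (Real.rpow_nonneg hgp.le _) (by positivity)
      _ = L * M / κ := by ring
  have habs : (0:ℝ) < |x| := abs_pos.mpr hx
  -- bound the remainder integral
  have hrem : ‖∫ ξ in (-c)..c, u' ξ * v ξ‖ ≤ (L*M/κ) * (1/|x|) * (2*c) := by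
    have hbd : ∀ ξ ∈ Set.uIoc (-c) c, ‖u' ξ * v ξ‖ ≤ (L*M/κ) * (1/|x|) := by
      intro ξ hξ
      have hξ' : ξ ∈ Icc (-c) c := by
        rw [Set.uIoc_of_le hcc] at hξ; exact ⟨hξ.1.le, hξ.2⟩
      rw [norm_mul, hvnorm ξ]
      apply mul_le_mul_of_nonneg_right (hu'norm ξ hξ') (by positivity)
    have := intervalIntegral.norm_integral_le_of_norm_le_const hbd
    have h : |c - -c| = 2*c := by rw [abs_of_pos (by linarith)]; ring
    calc ‖∫ ξ in (-c)..c, u' ξ * v ξ‖ ≤ (L*M/κ) * (1/|x|) * |c - -c| := this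
      _ = (L*M/κ) * (1/|x|) * (2*c) := by rw [h]
  have hbc : ‖u c * v c‖ ≤ 1/|x| := by
    rw [norm_mul, hvnorm c]
    nlinarith [hunorm c ⟨hcc, le_rfl⟩, norm_nonneg (u c), habs,
      one_div_pos.mpr habs]
  have hbmc : ‖u (-c) * v (-c)‖ ≤ 1/|x| := by
    rw [norm_mul, hvnorm (-c)]
    nlinarith [hunorm (-c) ⟨le_rfl, hcc⟩, norm_nonneg (u (-c)), one_div_pos.mpr habs]
  calc ‖∫ ξ in (-c)..c, (((g ξ) ^ t : ℝ) : ℂ) * Complex.exp (Complex.I * x * ξ)‖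
      = ‖u c * v c - u (-c) * v (-c) - ∫ ξ in (-c)..c, u' ξ * v ξ‖ := by rw [← hibp]
    _ ≤ ‖u c * v c‖ + ‖u (-c) * v (-c)‖ + ‖∫ ξ in (-c)..c, u' ξ * v ξ‖ := by
        apply le_trans (norm_sub_le _ _)
        gcongr
        exact norm_sub_le _ _
    _ ≤ 1/|x| + 1/|x| + (L*M/κ) * (1/|x|) * (2*c) := by gcongr
    _ = (2 + 2*c*L*M/κ)/|x| := by field_simp; ring

/-- Lemma `lem:estsinc`, upper estimate. -/
theorem stmt15 (c L : ℝ) (hc : 0 < c) (hL : 0 < L)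
    (φ : ℝ → ℂ) (hφ : InPhi c φ)
    (hC1 : ContDiffOn ℝ 1 (phihat φ) (Set.Icc (-c) c)) :
    ∃ C : ℝ, 0 < C ∧ ∀ x : ℝ,
      ∫ t in (0:ℝ)..L, ‖sincConv c (phihat φ) t x‖^2 ≤ C/(1+x^2) := by
  obtain ⟨_, _, κ, hκ, hprop⟩ := hφ
  set g : ℝ → ℝ := phihat φ with hgdef
  have hmem : ∀ ξ ∈ Set.Icc (-c) c, |ξ| ≤ c := fun ξ hξ => abs_le.mpr ⟨hξ.1, hξ.2⟩
  have hlb : ∀ ξ ∈ Set.Icc (-c) c, κ ≤ g ξ := fun ξ hξ => (hprop ξ (hmem ξ hξ)).2.1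
  have hub : ∀ ξ ∈ Set.Icc (-c) c, g ξ ≤ 1 := fun ξ hξ => (hprop ξ (hmem ξ hξ)).2.2
  have hlb0 : ∀ ξ ∈ Set.Icc (-c) c, 0 ≤ g ξ := fun ξ hξ => le_trans hκ.le (hlb ξ hξ)
  have hg'cont : ContinuousOn (derivWithin g (Set.Icc (-c) c)) (Set.Icc (-c) c) :=
    hC1.continuousOn_derivWithin (uniqueDiffOn_Icc (by linarith : (-c) < c)) le_rfl
  obtain ⟨M₀, hM₀⟩ := (isCompact_Icc).exists_bound_of_continuousOn hg'cont
  set M : ℝ := max M₀ 0 with hMdef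
  have hM : 0 ≤ M := le_max_right _ _
  have hMb : ∀ ξ ∈ Set.Icc (-c) c, |derivWithin g (Set.Icc (-c) c) ξ| ≤ M := by
    intro ξ hξ
    exact le_trans (by simpa using hM₀ ξ hξ) (le_max_left _ _)
  set B : ℝ := (2 + 2*c*L*M/κ)/(2*c) with hBdef
  have hB : 0 ≤ B := by positivity
  set D : ℝ := 1 + B^2 with hDdef
  refine ⟨L * D, by positivity, fun x => ?_⟩
  have hptwise : ∀ t ∈ Set.uIoc (0:ℝ) L, ‖‖sincConv c g t x‖^2‖ ≤ D/(1+x^2) := by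
    intro t ht
    rw [Set.uIoc_of_le hL.le] at ht
    have ht0 : 0 ≤ t := ht.1.le
    have h1 : ‖sincConv c g t x‖ ≤ 1 := aux_triv c hc g t ht0 hub hlb0 x
    have h1sq : ‖sincConv c g t x‖^2 ≤ 1 := by
      nlinarith [norm_nonneg (sincConv c g t x)]
    have h4 : ‖sincConv c g t x‖^2 * x^2 ≤ B^2 := by
      by_cases hx : x = 0
      · subst hx; nlinarith [sq_nonneg B, sq_nonneg ‖sincConv c g t 0‖]
      · have habs : (0:ℝ) < |x| := abs_pos.mpr hx
        have h2 : ‖sincConv c g t x‖ ≤ B/|x| := by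
          have hibp := aux_ibp c κ L M hc hκ hL hM g hC1 hlb hub hMb t x ht0 ht.2 hx
          rw [sincConv, norm_mul]
          have hn : ‖((1/(2*c):ℝ):ℂ)‖ = 1/(2*c) := by
            rw [Complex.norm_real, Real.norm_eq_abs, abs_of_pos (by positivity)]
          rw [hn, hBdef]
          calc 1/(2*c) * ‖∫ ξ in (-c)..c, (((g ξ) ^ t : ℝ) : ℂ) *
                Complex.exp (Complex.I * x * ξ)‖
              ≤ 1/(2*c) * ((2 + 2*c*L*M/κ)/|x|) := by
                apply mul_le_mul_of_nonneg_left hibp (by positivity)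
            _ = (2 + 2*c*L*M/κ)/(2*c)/|x| := by ring
        have h3 : ‖sincConv c g t x‖ * |x| ≤ B := by
          rw [← le_div_iff₀ habs]; exact h2
        nlinarith [mul_self_nonneg (‖sincConv c g t x‖ * |x|), sq_abs x,
          mul_le_mul h3 h3 (by positivity) hB]
    have hkey : ‖sincConv c g t x‖^2 * (1 + x^2) ≤ D := by
      calc ‖sincConv c g t x‖^2 * (1 + x^2)
          = ‖sincConv c g t x‖^2 + ‖sincConv c g t x‖^2 * x^2 := by ring
        _ ≤ 1 + B^2 := add_le_add h1sq h4
        _ = D := hDdef.symm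
    rw [Real.norm_eq_abs, abs_of_nonneg (sq_nonneg _),
      le_div_iff₀ (by positivity : (0:ℝ) < 1 + x^2)]
    exact hkey
  calc ∫ t in (0:ℝ)..L, ‖sincConv c g t x‖^2
      ≤ |∫ t in (0:ℝ)..L, ‖sincConv c g t x‖^2| := le_abs_self _
    _ ≤ (D/(1+x^2)) * |L - 0| := by
        have := intervalIntegral.norm_integral_le_of_norm_le_const hptwise
        simpa [Real.norm_eq_abs] using this
    _ = L * D / (1+x^2) := by rw [sub_zero, abs_of_pos hL]; ring
end
end

section
/- Let c > 0, L > 0, let φ ∈ Φ_c, and let κ ∈ (0,1) be such that κ ≤ φ̂(ξ) ≤ 1 for all |ξ| ≤ c. Set c_{φ,L} = 2(κ^{2L} − 1)/(π² ln κ) > 0. Then for every x ∈ ℝ with |x| ≤ π/(2c), ∫₀^L |(sinc(c·) * φ_t)(x)|² dt ≥ c_{φ,L}, where (sinc(c·) * φ_t)(x) = (1/(2c)) ∫_{−c}^{c} φ̂(ξ)^t e^{ixξ} dξ. -/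
open MeasureTheory Matrix
open scoped Real BigOperators

noncomputable section

lemma FT_continuous (φ : ℝ → ℂ) (hφI : Integrable φ) : Continuous (FT φ) := by
  apply MeasureTheory.continuous_of_dominated
    (F := fun (ξ t : ℝ) => Complex.exp (-(Complex.I * t * ξ)) * φ t) (bound := fun t => ‖φ t‖)
  · intro ξ
    exact ((Complex.continuous_exp.comp (by fun_prop)).aestronglyMeasurable).mul hφI.1
  · intro ξ
    filter_upwards with t
    have h1 : (-(Complex.I * t * ξ)) = ((-(t*ξ) : ℝ) : ℂ) * Complex.I := by push_cast; ring
    rw [norm_mul, h1, Complex.norm_exp_ofReal_mul_I, one_mul]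
  · exact hφI.norm
  · filter_upwards with t
    exact (Complex.continuous_exp.comp (by fun_prop)).mul continuous_const

/-- Lemma `lem:estsinc`, lower estimate. -/
theorem stmt16 (c L : ℝ) (hc : 0 < c) (hL : 0 < L)
    (φ : ℝ → ℂ) (κ : ℝ) (hκ0 : 0 < κ) (hκ1 : κ < 1)
    (hφI : Integrable φ) (hφ0 : FT φ 0 = 1)
    (hbd : ∀ ξ : ℝ, |ξ| ≤ c →
      FT φ ξ = ((FT φ ξ).re : ℂ) ∧ κ ≤ (FT φ ξ).re ∧ (FT φ ξ).re ≤ 1) :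
    0 < cPhiL κ L ∧
    ∀ x : ℝ, |x| ≤ Real.pi/(2*c) →
      cPhiL κ L ≤ ∫ t in (0:ℝ)..L, ‖sincConv c (phihat φ) t x‖^2 := by
  classical
  have hπ : (0:ℝ) < Real.pi := Real.pi_pos
  have hlogκ : Real.log κ < 0 := Real.log_neg hκ0 hκ1
  have hκ2L : κ ^ (2*L) < 1 := Real.rpow_lt_one hκ0.le hκ1 (by positivity)
  have hpos : 0 < cPhiL κ L := by
    unfold cPhiL
    rw [div_pos_iff]
    right
    constructor
    · linarith
    · exact mul_neg_of_pos_of_neg (by positivity) hlogκ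
  refine ⟨hpos, fun x hx => ?_⟩
  set g := phihat φ with hgdef
  have hgc : Continuous g := Complex.continuous_re.comp (FT_continuous φ hφI)
  have hκg : ∀ ξ ∈ Set.Icc (-c) c, κ ≤ g ξ := fun ξ hξ =>
    (hbd ξ (abs_le.mpr ⟨hξ.1, hξ.2⟩)).2.1
  have hg1 : ∀ ξ ∈ Set.Icc (-c) c, g ξ ≤ 1 := fun ξ hξ =>
    (hbd ξ (abs_le.mpr ⟨hξ.1, hξ.2⟩)).2.2
  have hxc : |x| * c ≤ Real.pi / 2 := by
    have h1 : |x| * c ≤ (Real.pi/(2*c)) * c := by nlinarith [abs_nonneg x]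
    have h2 : (Real.pi/(2*c)) * c = Real.pi / 2 := by field_simp
    linarith
  have hcos0 : ∀ ξ ∈ Set.Icc (-c) c, 0 ≤ Real.cos (x*ξ) := by
    intro ξ hξ
    apply Real.cos_nonneg_of_mem_Icc
    have hab : |x*ξ| ≤ Real.pi/2 := by
      rw [abs_mul]
      have : |x| * |ξ| ≤ |x| * c :=
        mul_le_mul_of_nonneg_left (abs_le.mpr ⟨hξ.1, hξ.2⟩) (abs_nonneg x)
      linarith
    constructor
    · have := (abs_le.mp hab).1; linarith
    · exact (abs_le.mp hab).2
  -- cosine integral lower bound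
  have hintcos : 4*c/Real.pi ≤ ∫ ξ in (-c)..c, Real.cos (x*ξ) := by
    rcases eq_or_ne x 0 with h0 | h0
    · simp only [h0, zero_mul, Real.cos_zero]
      rw [intervalIntegral.integral_const]
      rw [div_le_iff₀ hπ]
      have := Real.pi_gt_three
      simp only [smul_eq_mul, mul_one]
      nlinarith
    · rw [intervalIntegral.integral_comp_mul_left (f := Real.cos) h0,
        integral_cos]
      have hneg : x * (-c) = -(x*c) := by ring
      rw [hneg, Real.sin_neg, smul_eq_mul]
      rcases lt_or_gt_of_ne h0 with hxlt | hxgt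
      · have hxabs : |x| = -x := abs_of_neg hxlt
        have hxc' : -(x*c) ≤ Real.pi/2 := by rw [hxabs] at hxc; nlinarith
        have jord := Real.mul_le_sin (x := -(x*c)) (by nlinarith) hxc'
        rw [Real.sin_neg] at jord
        have key : x⁻¹ * (Real.sin (x*c) - - Real.sin (x*c)) = (-x)⁻¹ * (2 * (- Real.sin (x*c))) := by
          field_simp
          ring
        rw [key]
        have h4 : 4*c/Real.pi = (-x)⁻¹ * (2 * (2/Real.pi * (-(x*c)))) := by
          field_simp
          ring
        rw [h4]
        apply mul_le_mul_of_nonneg_left _ (le_of_lt (inv_pos.mpr (by linarith : (0:ℝ) < -x)))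
        nlinarith [jord]
      · have jord := Real.mul_le_sin (x := x*c) (by positivity) (by rw [abs_of_pos hxgt] at hxc; nlinarith)
        have h4 : 4*c/Real.pi = x⁻¹ * (2 * (2/Real.pi * (x*c))) := by
          field_simp
          ring
        rw [h4]
        apply mul_le_mul_of_nonneg_left _ (by positivity)
        nlinarith [jord]
  -- key pointwise bound in t
  have hcontcos : Continuous fun ξ : ℝ => Real.cos (x*ξ) := by fun_prop
  have key : ∀ t ∈ Set.Icc (0:ℝ) L, 2/Real.pi * κ ^ t ≤ ‖sincConv c g t x‖ := by
    intro t ht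
    have ht0 : 0 ≤ t := ht.1
    have hgt_cont : Continuous fun ξ : ℝ => (g ξ) ^ t :=
      hgc.rpow_const fun ξ => Or.inr ht0
    have hFc : Continuous fun ξ : ℝ =>
        ((((g ξ) ^ t : ℝ)) : ℂ) * Complex.exp (Complex.I * x * ξ) :=
      (Complex.continuous_ofReal.comp hgt_cont).mul
        (Complex.continuous_exp.comp (by fun_prop))
    have hInt : IntervalIntegrable
        (fun ξ : ℝ => ((((g ξ) ^ t : ℝ)) : ℂ) * Complex.exp (Complex.I * x * ξ))
        volume (-c) c := hFc.intervalIntegrable _ _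
    have hcc : (-c : ℝ) ≤ c := by linarith
    have hptre : ∀ ξ : ℝ,
        (((((g ξ) ^ t : ℝ)) : ℂ) * Complex.exp (Complex.I * x * ξ)).re
          = (g ξ) ^ t * Real.cos (x*ξ) := by
      intro ξ
      have h1 : Complex.I * x * ξ = ((x*ξ : ℝ) : ℂ) * Complex.I := by push_cast; ring
      rw [h1, Complex.re_ofReal_mul, Complex.exp_ofReal_mul_I_re]
    have hre : (∫ ξ in (-c)..c,
          ((((g ξ) ^ t : ℝ)) : ℂ) * Complex.exp (Complex.I * x * ξ)).re
        = ∫ ξ in (-c)..c, (g ξ) ^ t * Real.cos (x*ξ) := by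
      rw [intervalIntegral.integral_of_le hcc, intervalIntegral.integral_of_le hcc]
      have hre' := integral_re (μ := volume.restrict (Set.Ioc (-c) c)) hInt.1
      simp only [RCLike.re_to_complex] at hre'
      rw [← hre']
      exact MeasureTheory.integral_congr_ae (Filter.Eventually.of_forall fun ξ => hptre ξ)
    have h1 : κ^t * (4*c/Real.pi) ≤ ∫ ξ in (-c)..c, (g ξ)^t * Real.cos (x*ξ) := by
      have hkt : (0:ℝ) ≤ κ ^ t := Real.rpow_nonneg hκ0.le t
      have step1 : κ^t * (4*c/Real.pi) ≤ κ^t * ∫ ξ in (-c)..c, Real.cos (x*ξ) :=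
        mul_le_mul_of_nonneg_left hintcos hkt
      have step2 : κ^t * ∫ ξ in (-c)..c, Real.cos (x*ξ)
          = ∫ ξ in (-c)..c, κ^t * Real.cos (x*ξ) :=
        (intervalIntegral.integral_const_mul _ _).symm
      have step3 : (∫ ξ in (-c)..c, κ^t * Real.cos (x*ξ))
          ≤ ∫ ξ in (-c)..c, (g ξ)^t * Real.cos (x*ξ) := by
        apply intervalIntegral.integral_mono_on hcc
          ((continuous_const.mul hcontcos).intervalIntegrable _ _)
          ((hgt_cont.mul hcontcos).intervalIntegrable _ _)
        intro ξ hξ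
        apply mul_le_mul_of_nonneg_right _ (hcos0 ξ hξ)
        exact Real.rpow_le_rpow hκ0.le (hκg ξ hξ) ht0
      linarith
    have h2 : (sincConv c g t x).re ≤ ‖sincConv c g t x‖ := by
      exact Complex.re_le_norm _
    have h3 : (sincConv c g t x).re
        = (1/(2*c)) * ∫ ξ in (-c)..c, (g ξ) ^ t * Real.cos (x*ξ) := by
      unfold sincConv
      rw [Complex.re_ofReal_mul, hre]
    have h4 : 2/Real.pi * κ ^ t ≤ (1/(2*c)) * ∫ ξ in (-c)..c, (g ξ) ^ t * Real.cos (x*ξ) := by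
      have heq : 2/Real.pi * κ ^ t = (1/(2*c)) * (κ^t * (4*c/Real.pi)) := by
        field_simp
        ring
      rw [heq]
      apply mul_le_mul_of_nonneg_left h1 (by positivity)
    rw [← h3] at h4
    linarith
  -- norm bound ≤ 1
  have hnorm1 : ∀ t : ℝ, 0 ≤ t → ‖sincConv c g t x‖ ≤ 1 := by
    intro t ht0
    unfold sincConv
    rw [norm_mul, Complex.norm_real, Real.norm_eq_abs,
      abs_of_pos (by positivity : (0:ℝ) < 1/(2*c))]
    have hbnd : ‖∫ ξ in (-c)..c,
        ((((g ξ) ^ t : ℝ)) : ℂ) * Complex.exp (Complex.I * x * ξ)‖ ≤ 1 * |c - (-c)| := by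
      apply intervalIntegral.norm_integral_le_of_norm_le_const
      intro ξ hξ
      rw [Set.uIoc_of_le (by linarith : (-c:ℝ) ≤ c)] at hξ
      have hξ' : ξ ∈ Set.Icc (-c) c := ⟨hξ.1.le, hξ.2⟩
      have h1 : Complex.I * x * ξ = ((x*ξ : ℝ) : ℂ) * Complex.I := by push_cast; ring
      rw [norm_mul, h1,
        Complex.norm_exp_ofReal_mul_I, mul_one, Complex.norm_real, Real.norm_eq_abs]
      rw [abs_of_nonneg (Real.rpow_nonneg (le_trans hκ0.le (hκg ξ hξ')) t)]
      exact Real.rpow_le_one (le_trans hκ0.le (hκg ξ hξ')) (hg1 ξ hξ') ht0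
    have : |c - (-c)| = 2*c := by rw [abs_of_pos (by linarith)]; ring
    rw [this, one_mul] at hbnd
    calc 1/(2*c) * ‖∫ ξ in (-c)..c,
          ((((g ξ) ^ t : ℝ)) : ℂ) * Complex.exp (Complex.I * x * ξ)‖
        ≤ 1/(2*c) * (2*c) := mul_le_mul_of_nonneg_left hbnd (by positivity)
      _ = 1 := by field_simp
  -- measurability of t ↦ sincConv c g t x
  have hSsm : MeasureTheory.StronglyMeasurable fun t : ℝ =>
      ∫ ξ in Set.Ioc (-c) c,
        ((Real.exp (Real.log (g ξ) * t) : ℝ) : ℂ) * Complex.exp (Complex.I * x * ξ) := by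
    apply MeasureTheory.StronglyMeasurable.integral_prod_right'
      (f := fun p : ℝ × ℝ =>
        ((Real.exp (Real.log (g p.2) * p.1) : ℝ) : ℂ) * Complex.exp (Complex.I * x * p.2))
    apply Measurable.stronglyMeasurable
    apply Measurable.mul
    · exact Complex.measurable_ofReal.comp
        (Real.measurable_exp.comp
          (((Real.measurable_log.comp (hgc.measurable.comp measurable_snd)).mul
            measurable_fst)))
    · exact (Complex.continuous_exp.comp (by fun_prop :
        Continuous fun p : ℝ × ℝ => Complex.I * x * p.2)).measurable
  have hSeq : ∀ t : ℝ, sincConv c g t x = ((1/(2*c) : ℝ) : ℂ) *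
      ∫ ξ in Set.Ioc (-c) c,
        ((Real.exp (Real.log (g ξ) * t) : ℝ) : ℂ) * Complex.exp (Complex.I * x * ξ) := by
    intro t
    unfold sincConv
    congr 1
    rw [intervalIntegral.integral_of_le (by linarith : (-c:ℝ) ≤ c)]
    apply MeasureTheory.setIntegral_congr_fun measurableSet_Ioc
    intro ξ hξ
    have hgpos : 0 < g ξ := lt_of_lt_of_le hκ0 (hκg ξ ⟨hξ.1.le, hξ.2⟩)
    dsimp only
    rw [Real.rpow_def_of_pos hgpos]
  have hIconv : IntervalIntegrable (fun t => ‖sincConv c g t x‖^2) volume 0 L := by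
    rw [intervalIntegrable_iff_integrableOn_Ioc_of_le hL.le]
    apply MeasureTheory.Integrable.mono' (MeasureTheory.integrable_const (1:ℝ))
    · have : (fun t => ‖sincConv c g t x‖^2) = fun t =>
          ‖((1/(2*c) : ℝ) : ℂ) * ∫ ξ in Set.Ioc (-c) c,
            ((Real.exp (Real.log (g ξ) * t) : ℝ) : ℂ) * Complex.exp (Complex.I * x * ξ)‖^2 := by
        funext t; rw [hSeq t]
      rw [this]
      exact (((MeasureTheory.stronglyMeasurable_const.mul hSsm).norm).pow 2).aestronglyMeasurable
    · filter_upwards [MeasureTheory.ae_restrict_mem measurableSet_Ioc] with t ht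
      have h1 := hnorm1 t ht.1.le
      rw [Real.norm_eq_abs, abs_of_nonneg (by positivity)]
      nlinarith [norm_nonneg (sincConv c g t x)]
  have hκt : ∀ t : ℝ, κ ^ t = Real.exp (Real.log κ * t) := fun t =>
    Real.rpow_def_of_pos hκ0 t
  have hIlow : IntervalIntegrable (fun t => (2/Real.pi * κ ^ t)^2) volume 0 L := by
    have : (fun t : ℝ => (2/Real.pi * κ ^ t)^2)
        = fun t => (2/Real.pi * Real.exp (Real.log κ * t))^2 := by
      funext t; rw [hκt]
    rw [this]
    exact (by fun_prop : Continuous fun t : ℝ =>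
      (2/Real.pi * Real.exp (Real.log κ * t))^2).intervalIntegrable _ _
  have hmono : (∫ t in (0:ℝ)..L, (2/Real.pi * κ ^ t)^2)
      ≤ ∫ t in (0:ℝ)..L, ‖sincConv c g t x‖^2 := by
    apply intervalIntegral.integral_mono_on hL.le hIlow hIconv
    intro t ht
    have h1 := key t ht
    have h2 : (0:ℝ) ≤ 2/Real.pi * κ ^ t := by positivity
    nlinarith [norm_nonneg (sincConv c g t x)]
  have hcomp : (∫ t in (0:ℝ)..L, (2/Real.pi * κ ^ t)^2) = cPhiL κ L := by
    have hptw : ∀ t : ℝ, (2/Real.pi * κ ^ t)^2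
        = 4/Real.pi^2 * Real.exp ((2*Real.log κ) * t) := by
      intro t
      rw [hκt, mul_pow, div_pow, sq (Real.exp (Real.log κ * t)), ← Real.exp_add,
        show Real.log κ * t + Real.log κ * t = 2*Real.log κ * t by ring]
      norm_num
    have ha : (2*Real.log κ) ≠ 0 := by
      intro h; nlinarith
    calc (∫ t in (0:ℝ)..L, (2/Real.pi * κ ^ t)^2)
        = ∫ t in (0:ℝ)..L, 4/Real.pi^2 * Real.exp ((2*Real.log κ) * t) := by
          apply intervalIntegral.integral_congr
          intro t _
          exact hptw t
      _ = 4/Real.pi^2 * ∫ t in (0:ℝ)..L, Real.exp ((2*Real.log κ) * t) := by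
          rw [intervalIntegral.integral_const_mul]
      _ = 4/Real.pi^2 * ((2*Real.log κ)⁻¹ *
            (Real.exp ((2*Real.log κ)*L) - Real.exp ((2*Real.log κ)*0))) := by
          rw [intervalIntegral.integral_comp_mul_left (f := Real.exp) ha,
            integral_exp, smul_eq_mul]
      _ = cPhiL κ L := by
          have hexp : Real.exp ((2*Real.log κ)*L) = κ ^ (2*L) := by
            rw [show (2*Real.log κ)*L = Real.log κ * (2*L) by ring,
              ← Real.rpow_def_of_pos hκ0]
          rw [hexp, mul_zero, Real.exp_zero]
          unfold cPhiL
          have hne1 : Real.log κ ≠ 0 := ne_of_lt hlogκ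
          have hne2 : Real.pi ≠ 0 := ne_of_gt hπ
          field_simp
          ring
  linarith
end
end
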